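/- arXiv:2511.11841 — 5 statements merged into one kernel-verified Lean document; each statement's English description precedes it below -/
import Mathlib

section
/- Let L/K be a finite extension of a perfect field K inside a fixed algebraic closure K̄, with Galois closure L̃, G = Gal(L̃/K) and H = Gal(L̃/L). If H is not contained in any proper normal subgroup of G, then L/K is primitive. In particular, if G is a simple group, then L/K is primitive. -/
open IntermediateField Module

section Defs

variable (K Kbar : Type*) [Field K] [Field Kbar] [Algebra K Kbar]

/-- The Galois closure inside the ambient field `Kbar` of an intermediate field `L` of
`Kbar / K`: the compositum of all the `K`-conjugates of `L` in `Kbar`. -/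
noncomputable def galClosure (L : IntermediateField K Kbar) : IntermediateField K Kbar :=
  ⨆ f : ↥L →ₐ[K] Kbar, f.fieldRange

/-- The subgroup `H = Gal(L̃/L)` of `G = Gal(L̃/K)`. -/
noncomputable def fixSub (L : IntermediateField K Kbar) :
    Subgroup (↥(galClosure K Kbar L) ≃ₐ[K] ↥(galClosure K Kbar L)) :=
  (IntermediateField.comap (galClosure K Kbar L).val L).fixingSubgroup

/-- The cluster size `r_K(L) = [N_G(H) : H]`. -/
noncomputable def clusterSize (L : IntermediateField K Kbar) : ℕ :=
  (fixSub K Kbar L).relIndex (Subgroup.normalizer (fixSub K Kbar L : Set (↥(galClosure K Kbar L) ≃ₐ[K] ↥(galClosure K Kbar L))))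

/-- The number of clusters `s_K(L) = [G : N_G(H)]`. -/
noncomputable def numClusters (L : IntermediateField K Kbar) : ℕ :=
  (Subgroup.normalizer (fixSub K Kbar L : Set (↥(galClosure K Kbar L) ≃ₐ[K] ↥(galClosure K Kbar L)))).index

/-- The ascending index `t_K(L) = [G : H^G]`. -/
noncomputable def ascIndex (L : IntermediateField K Kbar) : ℕ :=
  (Subgroup.normalClosure (fixSub K Kbar L :
      Set (↥(galClosure K Kbar L) ≃ₐ[K] ↥(galClosure K Kbar L)))).index

/-- The quantity `u_K(L) = [H^G : H]`. -/
noncomputable def uIndex (L : IntermediateField K Kbar) : ℕ :=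
  (fixSub K Kbar L).relIndex (Subgroup.normalClosure (fixSub K Kbar L :
      Set (↥(galClosure K Kbar L) ≃ₐ[K] ↥(galClosure K Kbar L))))

/-- `M/K` is obtained by strong cluster magnification from `L/K` through `F/K`. -/
def IsSCMvia (M L F : IntermediateField K Kbar) : Prop :=
  L ≤ M ∧ 2 < Module.finrank K ↥L ∧ FiniteDimensional K ↥F ∧ IsGalois K ↥F ∧
    galClosure K Kbar L ⊓ F = ⊥ ∧ L ⊔ F = M

/-- `M/K` is primitive: it is not obtained by a nontrivial strong cluster magnification
from any subextension over `K`. -/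
def IsPrimitive (M : IntermediateField K Kbar) : Prop :=
  ¬ ∃ L F : IntermediateField K Kbar, IsSCMvia K Kbar M L F ∧ F ≠ ⊥

/-- `M/K` is obtained by strong general magnification from `L/K` through `J/K`. -/
def IsSGMvia (M L J : IntermediateField K Kbar) : Prop :=
  L ≤ M ∧ 1 < Module.finrank K ↥L ∧ FiniteDimensional K ↥J ∧
    galClosure K Kbar L ⊓ galClosure K Kbar J = ⊥ ∧ L ⊔ J = M

/-- `M/K` is general primitive: not obtained by a nontrivial strong general magnification
from any subextension over `K`. -/
def IsGeneralPrimitive (M : IntermediateField K Kbar) : Prop :=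
  ¬ ∃ L J : IntermediateField K Kbar, IsSGMvia K Kbar M L J ∧ J ≠ ⊥

/-- `F/E` is a Galois pair of intermediate fields: `E ≤ F` and `F/E` is Galois. -/
def IsGaloisPair (E F : IntermediateField K Kbar) : Prop :=
  ∃ h : E ≤ F, IsGalois ↥E ↥(IntermediateField.extendScalars h)

/-- One step of the unique descending chain: `N'` is an intermediate field of `N/K` such
that `N/N'` is Galois of maximal possible degree. -/
def DescStep (N N' : IntermediateField K Kbar) : Prop :=
  N' ≤ N ∧ IsGaloisPair K Kbar N' N ∧
    ∀ N'' : IntermediateField K Kbar, N'' ≤ N → IsGaloisPair K Kbar N'' N →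
      Module.finrank K ↥N' ≤ Module.finrank K ↥N''

/-- One step of the unique ascending chain for `L/K`: `F'` is an intermediate field of
`L/F` such that `F'/F` is Galois of maximal possible degree. -/
def AscStep (L F F' : IntermediateField K Kbar) : Prop :=
  F ≤ F' ∧ F' ≤ L ∧ IsGaloisPair K Kbar F F' ∧
    ∀ F'' : IntermediateField K Kbar, F ≤ F'' → F'' ≤ L → IsGaloisPair K Kbar F F'' →
      Module.finrank K ↥F'' ≤ Module.finrank K ↥F'

/-- `E` occurs in the unique descending chain of `L/K`. -/
def InDescChain (L E : IntermediateField K Kbar) : Prop :=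
  Relation.ReflTransGen (DescStep K Kbar) L E

/-- `E` occurs in the unique ascending chain of `L/K`. -/
def InAscChain (L E : IntermediateField K Kbar) : Prop :=
  Relation.ReflTransGen (AscStep K Kbar L) ⊥ E

end Defs

section Aux

variable (K Kbar : Type*) [Field K] [PerfectField K] [Field Kbar] [Algebra K Kbar]
  [IsAlgClosure K Kbar]

lemma key_normal_subgroup (M : IntermediateField K Kbar) [FiniteDimensional K ↥M]
    {L F : IntermediateField K Kbar} (h : IsSCMvia K Kbar M L F) (hF : F ≠ ⊥) :
    ∃ N : Subgroup (↥(galClosure K Kbar M) ≃ₐ[K] ↥(galClosure K Kbar M)),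
      N.Normal ∧ fixSub K Kbar M ≤ N ∧ N ≠ ⊤ ∧ N ≠ ⊥ := by
  obtain ⟨hLM, hrank, hFfd, hFgal, hinf, hsup⟩ := h
  have hE : galClosure K Kbar M = normalClosure K ↥M Kbar := rfl
  haveI : Normal K Kbar := IsAlgClosure.normal K Kbar
  haveI hEfd : FiniteDimensional K ↥(galClosure K Kbar M) := by
    rw [hE]; infer_instance
  haveI hEnormal : Normal K ↥(galClosure K Kbar M) := by
    rw [hE]; infer_instance
  haveI hEgalois : IsGalois K ↥(galClosure K Kbar M) := ⟨⟩
  set E := galClosure K Kbar M with hEdef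
  have hME : M ≤ E := IntermediateField.le_normalClosure M
  have hFM : F ≤ M := hsup ▸ le_sup_right
  have hFE : F ≤ E := hFM.trans hME
  set F' : IntermediateField K ↥E := IntermediateField.comap E.val F with hF'def
  have hmapF' : IntermediateField.map E.val F' = F :=
    IntermediateField.map_comap_eq_self (by rwa [IntermediateField.fieldRange_val])
  have e : ↥F' ≃ₐ[K] ↥F :=
    (IntermediateField.equivMap F' E.val).trans (IntermediateField.equivOfEq hmapF')
  haveI : Normal K ↥F' := (AlgEquiv.transfer_normal e).mpr hFgal.to_normal
  haveI : IsGalois K ↥F' := ⟨⟩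
  refine ⟨F'.fixingSubgroup, inferInstance, ?_, ?_, ?_⟩
  · intro σ hσ
    have hσ' : σ ∈ (IntermediateField.comap E.val M).fixingSubgroup := hσ
    refine (IntermediateField.mem_fixingSubgroup_iff _ _).mpr fun x hx => ?_
    exact (IntermediateField.mem_fixingSubgroup_iff _ _).mp hσ' x
      (show E.val x ∈ M from hFM hx)
  · intro htop
    have hbotfix : (⊥ : IntermediateField K ↥E).fixingSubgroup = ⊤ :=
      IntermediateField.fixingSubgroup_bot
    have hF'bot : F' = (⊥ : IntermediateField K ↥E) := by
      have h1 := IsGalois.fixedField_fixingSubgroup (F := K) (E := ↥E) F'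
      have h2 := IsGalois.fixedField_fixingSubgroup (F := K) (E := ↥E)
        (⊥ : IntermediateField K ↥E)
      rw [htop] at h1
      rw [hbotfix] at h2
      rw [← h1, ← h2]
    apply hF
    rw [eq_bot_iff]
    intro x hx
    have hxE : x ∈ E := hFE hx
    have hx' : (⟨x, hxE⟩ : ↥E) ∈ F' := hx
    rw [hF'bot, IntermediateField.mem_bot] at hx'
    obtain ⟨k, hk⟩ := hx'
    refine IntermediateField.mem_bot.mpr ⟨k, ?_⟩
    have := congrArg E.val hk
    rwa [E.val.commutes k] at this
  · intro hbot
    have htopfix : (⊤ : IntermediateField K ↥E).fixingSubgroup = ⊥ :=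
      IntermediateField.fixingSubgroup_top
    have hF'top : F' = (⊤ : IntermediateField K ↥E) := by
      have h1 := IsGalois.fixedField_fixingSubgroup (F := K) (E := ↥E) F'
      have h2 := IsGalois.fixedField_fixingSubgroup (F := K) (E := ↥E)
        (⊤ : IntermediateField K ↥E)
      rw [hbot] at h1
      rw [htopfix] at h2
      rw [← h1, ← h2]
    -- Then E ≤ F as subsets of Kbar, so L ≤ galClosure L ⊓ F = ⊥.
    have hEF : ∀ x : ↥E, (x : Kbar) ∈ F := by
      intro x
      have : x ∈ F' := hF'top ▸ IntermediateField.mem_top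
      exact this
    have hLbot : L ≤ (⊥ : IntermediateField K Kbar) := by
      rw [← hinf]
      refine le_inf (IntermediateField.le_normalClosure L) ?_
      intro y hy
      have hyE : y ∈ E := hME (hLM hy)
      exact hEF ⟨y, hyE⟩
    have hLeq : L = ⊥ := le_bot_iff.mp hLbot
    rw [hLeq, IntermediateField.finrank_bot] at hrank
    omega

end Aux

/-- Let `L/K` be a finite extension of a perfect field `K` inside a fixed
algebraic closure `Kbar`, with Galois closure `L̃`, `G = Gal(L̃/K)` and `H = Gal(L̃/L)`.
If `H` is not contained in any proper normal subgroup of `G`, then `L/K` is primitive.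
In particular, if `G` is a simple group, then `L/K` is primitive. -/


theorem primitive_of_fixSub_not_le_proper_normal
    (K Kbar : Type*) [Field K] [PerfectField K] [Field Kbar] [Algebra K Kbar]
    [IsAlgClosure K Kbar]
    (L : IntermediateField K Kbar) [FiniteDimensional K ↥L] :
    ((∀ N : Subgroup (↥(galClosure K Kbar L) ≃ₐ[K] ↥(galClosure K Kbar L)),
        N.Normal → fixSub K Kbar L ≤ N → N = ⊤) →
      IsPrimitive K Kbar L) ∧
    (IsSimpleGroup (↥(galClosure K Kbar L) ≃ₐ[K] ↥(galClosure K Kbar L)) →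
      IsPrimitive K Kbar L) := by
  constructor
  · rintro hprem ⟨L', F, hscm, hF⟩
    obtain ⟨N, hN, hHN, hNtop, hNbot⟩ := key_normal_subgroup K Kbar L hscm hF
    exact hNtop (hprem N hN hHN)
  · rintro hsimple ⟨L', F, hscm, hF⟩
    obtain ⟨N, hN, hHN, hNtop, hNbot⟩ := key_normal_subgroup K Kbar L hscm hF
    rcases hN.eq_bot_or_eq_top with h | h
    · exact hNbot h
    · exact hNtop h
end

section
/- Let L/K be a nontrivial finite extension of a perfect field K inside a fixed algebraic closure K̄. Suppose one of the fields in the unique descending chain of L/K which is different from both L and K coincides with one of the fields in the unique ascending chain of L/K, i.e. N_i = F_j for some i, j with N_i ≠ L and N_i ≠ K. Then L/K is primitive. -/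
open IntermediateField Module

section Aux

namespace SCMaux

set_option linter.unusedSectionVars false

open IntermediateField Module

variable {K Kbar : Type*} [Field K] [Field Kbar] [Algebra K Kbar]

theorem mem_map' {L L' : Type*} [Field L] [Field L'] [Algebra K L] [Algebra K L']
    {S : IntermediateField K L} {f : L →ₐ[K] L'} {x : L'} :
    x ∈ S.map f ↔ ∃ y ∈ S, f y = x := by
  rw [← SetLike.mem_coe, coe_map]
  simp [Set.mem_image]

theorem map_eq_of_fixes {E : IntermediateField K Kbar} (τ : Kbar ≃ₐ[K] Kbar)
    (h : ∀ x ∈ E, τ x = x) : E.map ↑τ = E := by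
  apply SetLike.ext
  intro x
  rw [mem_map']
  constructor
  · rintro ⟨y, hy, rfl⟩
    have hy' : (↑τ : Kbar →ₐ[K] Kbar) y = y := h y hy
    rw [hy']; exact hy
  · intro hx; exact ⟨x, hx, h x hx⟩

/-- "Good pair": `F` is stable under all automorphisms of `Kbar` fixing `E` pointwise. -/
def GPgood (E F : IntermediateField K Kbar) : Prop :=
  ∀ τ : Kbar ≃ₐ[K] Kbar, (∀ x ∈ E, τ x = x) → F.map ↑τ = F

/-- Every automorphism fixes `⊥` pointwise. -/
theorem fixes_bot (τ : Kbar ≃ₐ[K] Kbar) : ∀ x ∈ (⊥ : IntermediateField K Kbar), τ x = x := by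
  intro x hx
  rw [IntermediateField.mem_bot] at hx
  obtain ⟨k, rfl⟩ := hx
  exact τ.commutes k


variable [PerfectField K] [IsAlgClosure K Kbar]

theorem normal_top (E : IntermediateField K Kbar) : Normal ↥E Kbar := by
  haveI : Algebra.IsAlgebraic K Kbar := ‹IsAlgClosure K Kbar›.isAlgebraic
  haveI : Algebra.IsAlgebraic ↥E Kbar := Algebra.IsAlgebraic.tower_top (K := K) ↥E
  haveI : IsAlgClosed Kbar := ‹IsAlgClosure K Kbar›.isAlgClosed
  haveI : IsAlgClosure ↥E Kbar := ⟨‹_›, ‹_›⟩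
  infer_instance

theorem sep_all (E : IntermediateField K Kbar) : Algebra.IsSeparable ↥E Kbar := by
  haveI : Algebra.IsAlgebraic K Kbar := ‹IsAlgClosure K Kbar›.isAlgebraic
  haveI : Algebra.IsSeparable K Kbar := inferInstance
  exact Algebra.isSeparable_tower_top_of_isSeparable K ↥E Kbar

theorem pair_of_GPgood {E F : IntermediateField K Kbar} (hEF : E ≤ F) (hGP : GPgood E F) :
    IsGaloisPair K Kbar E F := by
  refine ⟨hEF, ?_⟩
  haveI := normal_top (K := K) (Kbar := Kbar) E
  haveI : Algebra.IsSeparable ↥E Kbar := sep_all E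
  haveI : Algebra.IsSeparable ↥E ↥(extendScalars hEF) :=
    Algebra.isSeparable_tower_bot_of_isSeparable ↥E ↥(extendScalars hEF) Kbar
  refine { to_isSeparable := inferInstance, to_normal := ?_ }
  rw [normal_iff_forall_map_eq']
  intro σ
  have hres : ∀ x ∈ E, (σ.restrictScalars K : Kbar ≃ₐ[K] Kbar) x = x := by
    intro x hx
    exact σ.commutes ⟨x, hx⟩
  have hmap := hGP (σ.restrictScalars K) hres
  apply SetLike.coe_injective
  have h1 : (((extendScalars hEF).map ↑σ : IntermediateField ↥E Kbar) : Set Kbar)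
      = ((F.map ↑(σ.restrictScalars K) : IntermediateField K Kbar) : Set Kbar) := rfl
  rw [h1, hmap]
  rfl

theorem GPgood_of_pair {E F : IntermediateField K Kbar} (h : IsGaloisPair K Kbar E F) :
    GPgood E F := by
  obtain ⟨hEF, hgal⟩ := h
  haveI := normal_top (K := K) (Kbar := Kbar) E
  intro τ hτ
  let σ : Kbar ≃ₐ[↥E] Kbar :=
    { τ.toRingEquiv with commutes' := fun x => hτ x.1 x.2 }
  have hmap := normal_iff_forall_map_eq'.mp hgal.to_normal σ
  apply SetLike.coe_injective
  have h1 : ((F.map ↑τ : IntermediateField K Kbar) : Set Kbar)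
      = (((extendScalars hEF).map ↑σ : IntermediateField ↥E Kbar) : Set Kbar) := rfl
  rw [h1, hmap]
  rfl

theorem findim_of_le {N L : IntermediateField K Kbar} [FiniteDimensional K ↥L] (h : N ≤ L) :
    FiniteDimensional K ↥N :=
  FiniteDimensional.of_injective (IntermediateField.inclusion h).toLinearMap
    (fun x y hxy => by
      have h2 : ((IntermediateField.inclusion h) x : Kbar) = ((IntermediateField.inclusion h) y : Kbar) :=
        congrArg Subtype.val hxy
      exact Subtype.ext h2)

end SCMaux

end Aux

namespace SCMaux2

open IntermediateField Module SCMaux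

set_option linter.unusedSectionVars false

variable {K Kbar : Type*} [Field K] [Field Kbar] [Algebra K Kbar]

section Generic

variable {T : Type*} [Field T] [Algebra K T]

theorem mem_mapT {S : IntermediateField K T} {f : T →ₐ[K] T} {x : T} :
    x ∈ S.map f ↔ ∃ y ∈ S, f y = x := by
  rw [← SetLike.mem_coe, coe_map]
  simp [Set.mem_image]

theorem map_eq_of_fixesT {E : IntermediateField K T} (τ : T ≃ₐ[K] T)
    (h : ∀ x ∈ E, τ x = x) : E.map ↑τ = E := by
  apply SetLike.ext
  intro x
  rw [mem_mapT]
  constructor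
  · rintro ⟨y, hy, rfl⟩
    have hy' : (↑τ : T →ₐ[K] T) y = y := h y hy
    rw [hy']; exact hy
  · intro hx; exact ⟨x, hx, h x hx⟩

theorem mapAE_one (S : IntermediateField K T) : S.map ↑(1 : T ≃ₐ[K] T) = S :=
  map_eq_of_fixesT (1 : T ≃ₐ[K] T) (fun _ _ => rfl)

theorem mapAE_mul (S : IntermediateField K T) (a b : T ≃ₐ[K] T) :
    S.map ((a * b : T ≃ₐ[K] T) : T →ₐ[K] T) = (S.map (b : T →ₐ[K] T)).map (a : T →ₐ[K] T) := by
  rw [map_map]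
  congr 1

theorem mapAE_inv (S : IntermediateField K T) (a : T ≃ₐ[K] T)
    (h : S.map (a : T →ₐ[K] T) = S) :
    S.map ((a⁻¹ : T ≃ₐ[K] T) : T →ₐ[K] T) = S := by
  conv_lhs => rw [← h]
  rw [map_map]
  have h2 : ((↑a⁻¹ : T →ₐ[K] T).comp ↑a) = (↑(1 : T ≃ₐ[K] T) : T →ₐ[K] T) := by
    ext x
    exact a.symm_apply_apply x
  rw [h2, mapAE_one]

end Generic

variable [PerfectField K] [IsAlgClosure K Kbar]

set_option maxHeartbeats 1000000 in
/-- There is a minimal subextension `M` of `L/K` such that `L/M` is Galois. -/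
theorem exists_min_galois_under (L : IntermediateField K Kbar) [FiniteDimensional K ↥L] :
    ∃ M : IntermediateField K Kbar, M ≤ L ∧ IsGaloisPair K Kbar M L ∧
      ∀ N : IntermediateField K Kbar, N ≤ L → IsGaloisPair K Kbar N L → M ≤ N := by
  classical
  set Nt : IntermediateField K Kbar := normalClosure K ↥L Kbar with hNt
  haveI : FiniteDimensional K ↥Nt := normalClosure.is_finiteDimensional K ↥L Kbar
  haveI hNnorm : Normal K ↥Nt := normalClosure.normal K ↥L Kbar
  haveI : Algebra.IsAlgebraic K Kbar := ‹IsAlgClosure K Kbar›.isAlgebraic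
  haveI : Algebra.IsSeparable K Kbar := inferInstance
  haveI : Algebra.IsSeparable K ↥Nt := Algebra.isSeparable_tower_bot_of_isSeparable K ↥Nt Kbar
  haveI : IsGalois K ↥Nt := {}
  haveI : Normal K Kbar := inferInstance
  have hLN : L ≤ Nt := IntermediateField.le_normalClosure L
  set D : IntermediateField K ↥Nt := comap Nt.val L with hD
  let St : Subgroup (↥Nt ≃ₐ[K] ↥Nt) :=
    { carrier := {σ : ↥Nt ≃ₐ[K] ↥Nt | D.map (σ : ↥Nt →ₐ[K] ↥Nt) = D}
      one_mem' := mapAE_one D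
      mul_mem' := by
        intro a b ha hb
        have ha' : D.map (a : ↥Nt →ₐ[K] ↥Nt) = D := ha
        have hb' : D.map (b : ↥Nt →ₐ[K] ↥Nt) = D := hb
        show D.map ((a * b : ↥Nt ≃ₐ[K] ↥Nt) : ↥Nt →ₐ[K] ↥Nt) = D
        rw [mapAE_mul, hb', ha']
      inv_mem' := by
        intro a ha
        exact mapAE_inv D a ha }
  have hmemSt : ∀ σ : ↥Nt ≃ₐ[K] ↥Nt, σ ∈ St ↔ D.map (σ : ↥Nt →ₐ[K] ↥Nt) = D :=
    fun _ => Iff.rfl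
  have hcomm : ∀ (τ : Kbar ≃ₐ[K] Kbar) (y : ↥Nt),
      τ ↑y = ↑(AlgEquiv.restrictNormalHom Nt τ y) :=
    fun τ y => (AlgEquiv.restrictNormalHom_apply Nt τ y).symm
  have lift : ∀ σ : ↥Nt ≃ₐ[K] ↥Nt, ∃ τ : Kbar ≃ₐ[K] Kbar,
      AlgEquiv.restrictNormalHom Nt τ = σ :=
    fun σ => AlgEquiv.restrictNormalHom_surjective Kbar σ
  have claimA : ∀ A : IntermediateField K Kbar, A ≤ L → GPgood A L →
      ∀ σ : ↥Nt ≃ₐ[K] ↥Nt, (∀ x ∈ comap Nt.val A, σ x = x) → σ ∈ St := by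
    intro A hAL hGP
    have hle : ∀ σ : ↥Nt ≃ₐ[K] ↥Nt, (∀ x ∈ comap Nt.val A, σ x = x) →
        D.map (σ : ↥Nt →ₐ[K] ↥Nt) ≤ D := by
      intro σ hfix
      obtain ⟨τ, hτ⟩ := lift σ
      have hτfix : ∀ x ∈ A, τ x = x := by
        intro x hx
        have hxN : x ∈ Nt := hLN (hAL hx)
        have hy : (⟨x, hxN⟩ : ↥Nt) ∈ comap Nt.val A := hx
        have hc := hcomm τ ⟨x, hxN⟩
        rw [hτ, hfix ⟨x, hxN⟩ hy] at hc
        exact hc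
      have hLmap : L.map ↑τ = L := hGP τ hτfix
      intro z hz
      obtain ⟨y, hy, rfl⟩ := mem_mapT.mp hz
      show ((σ y : ↥Nt) : Kbar) ∈ L
      have h1 : ((σ y : ↥Nt) : Kbar) = τ ↑y := by rw [hcomm τ y, hτ]
      rw [h1, ← hLmap]
      exact mem_map'.mpr ⟨↑y, hy, rfl⟩
    intro σ hfix
    have hfixinv : ∀ x ∈ comap Nt.val A, σ⁻¹ x = x := by
      intro x hx
      conv_lhs => rw [← hfix x hx]
      exact σ.symm_apply_apply x
    rw [hmemSt]
    apply le_antisymm (hle σ hfix)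
    intro z hz
    have h1 : σ⁻¹ z ∈ D := hle σ⁻¹ hfixinv (mem_mapT.mpr ⟨z, hz, rfl⟩)
    exact mem_mapT.mpr ⟨σ⁻¹ z, h1, σ.apply_symm_apply z⟩
  have claimB : ∀ A : IntermediateField K Kbar, A ≤ L →
      (∀ σ : ↥Nt ≃ₐ[K] ↥Nt, (∀ x ∈ comap Nt.val A, σ x = x) → σ ∈ St) → GPgood A L := by
    intro A hAL hst τ hτfix
    set σ : ↥Nt ≃ₐ[K] ↥Nt := AlgEquiv.restrictNormalHom Nt τ with hσ
    have hσfix : ∀ y ∈ comap Nt.val A, σ y = y := by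
      intro y hy
      have h := hτfix ↑y hy
      rw [hcomm τ y] at h
      exact Subtype.coe_injective h
    have hDst : D.map (σ : ↥Nt →ₐ[K] ↥Nt) = D := (hmemSt σ).mp (hst σ hσfix)
    apply SetLike.ext
    intro x
    rw [mem_map']
    constructor
    · rintro ⟨w, hw, rfl⟩
      have hwN : w ∈ Nt := hLN hw
      have h1 : (⟨w, hwN⟩ : ↥Nt) ∈ D := hw
      have h2 : σ ⟨w, hwN⟩ ∈ D := by
        rw [← hDst]
        exact mem_mapT.mpr ⟨⟨w, hwN⟩, h1, rfl⟩
      have h3 : (↑τ : Kbar →ₐ[K] Kbar) w = ↑(σ ⟨w, hwN⟩) := hcomm τ ⟨w, hwN⟩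
      rw [h3]
      exact h2
    · intro hx
      have hxN : x ∈ Nt := hLN hx
      have h1 : (⟨x, hxN⟩ : ↥Nt) ∈ D := hx
      rw [← hDst] at h1
      obtain ⟨y, hy, hyx⟩ := mem_mapT.mp h1
      refine ⟨↑y, hy, ?_⟩
      show τ ↑y = x
      have h5 : τ ↑y = ↑(σ y) := hcomm τ y
      rw [h5]
      have hyx' : σ y = ⟨x, hxN⟩ := hyx
      rw [hyx']
  set M₀ : IntermediateField K ↥Nt := fixedField St with hM₀
  have hArtin : fixingSubgroup M₀ = St := IntermediateField.fixingSubgroup_fixedField St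
  have hfixD : fixedField (fixingSubgroup D) = D := IsGalois.fixedField_fixingSubgroup D
  have hHSt : fixingSubgroup D ≤ St := by
    intro σ hσ
    rw [hmemSt]
    exact map_eq_of_fixesT σ ((mem_fixingSubgroup_iff D σ).mp hσ)
  have hM₀D : M₀ ≤ D := by
    have h1 : M₀ ≤ fixedField (fixingSubgroup D) :=
      (IntermediateField.le_iff_le (fixingSubgroup D) M₀).mpr
        (by rw [hArtin]; exact hHSt)
    rwa [hfixD] at h1
  set M : IntermediateField K Kbar := M₀.map Nt.val with hM
  have hmapD : D.map Nt.val = L := by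
    apply SetLike.ext
    intro x
    rw [mem_map']
    constructor
    · rintro ⟨y, hy, rfl⟩; exact hy
    · intro hx; exact ⟨⟨x, hLN hx⟩, hx, rfl⟩
  have hML : M ≤ L := by
    rw [hM, ← hmapD]
    exact map_mono Nt.val hM₀D
  have hcomapM : comap Nt.val M = M₀ := by
    apply SetLike.ext
    intro y
    constructor
    · intro hy
      obtain ⟨z, hz, hzy⟩ := mem_map'.mp (show (y : Kbar) ∈ M₀.map Nt.val from hy)
      have hzy' : z = y := Subtype.coe_injective hzy
      rwa [hzy'] at hz
    · intro hy
      exact mem_map'.mpr ⟨y, hy, rfl⟩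
  refine ⟨M, hML, ?_, ?_⟩
  · apply pair_of_GPgood hML
    apply claimB M hML
    intro σ hσfix
    rw [hcomapM] at hσfix
    have hmem : σ ∈ fixingSubgroup M₀ := (mem_fixingSubgroup_iff M₀ σ).mpr hσfix
    rwa [hArtin] at hmem
  · intro N hNL hpair
    have hGP := GPgood_of_pair hpair
    have hst := claimA N hNL hGP
    have hsub : fixingSubgroup (comap Nt.val N) ≤ St := by
      intro σ hσ
      exact hst σ ((mem_fixingSubgroup_iff _ σ).mp hσ)
    have h1 : M₀ ≤ fixedField (fixingSubgroup (comap Nt.val N)) :=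
      (IntermediateField.le_iff_le (fixingSubgroup (comap Nt.val N)) M₀).mpr
        (by rw [hArtin]; exact hsub)
    rw [IsGalois.fixedField_fixingSubgroup (comap Nt.val N)] at h1
    rw [hM]
    refine (map_mono Nt.val h1).trans ?_
    intro x hx
    obtain ⟨y, hy, rfl⟩ := mem_map'.mp hx
    exact hy

/-- Fields in the ascending chain either are `⊥` or contain any Galois subextension. -/
theorem asc_le {L F E : IntermediateField K Kbar} [FiniteDimensional K ↥L]
    (hFL : F ≤ L) (hFgal : IsGalois K ↥F) (hasc : InAscChain K Kbar L E) :
    E = ⊥ ∨ F ≤ E := by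
  haveI : Normal K Kbar := inferInstance
  induction hasc with
  | refl => exact Or.inl rfl
  | @tail b c hb step ih =>
    right
    obtain ⟨hbc, hcL, hpair, hmax⟩ := step
    rcases ih with rfl | hFb
    · have hGPc : GPgood (⊥ : IntermediateField K Kbar) c := GPgood_of_pair hpair
      have hGPsup : GPgood (⊥ : IntermediateField K Kbar) (F ⊔ c) := by
        intro τ hτ
        rw [IntermediateField.map_sup]
        rw [normal_iff_forall_map_eq'.mp hFgal.to_normal τ, hGPc τ (fixes_bot τ)]
      have hpair' : IsGaloisPair K Kbar ⊥ (F ⊔ c) := pair_of_GPgood bot_le hGPsup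
      have hrank := hmax (F ⊔ c) bot_le (sup_le hFL hcL) hpair'
      haveI : FiniteDimensional K ↥(F ⊔ c) := findim_of_le (sup_le hFL hcL)
      have heq : c = F ⊔ c := IntermediateField.eq_of_le_of_finrank_le le_sup_right hrank
      exact le_sup_left.trans heq.ge
    · exact hFb.trans hbc

theorem desc_le {N E : IntermediateField K Kbar}
    (h : Relation.ReflTransGen (DescStep K Kbar) N E) : E ≤ N := by
  induction h with
  | refl => exact le_rfl
  | tail hb step ih => exact step.1.trans ih

end SCMaux2


/-- Let `L/K` be a nontrivial finite extension of a perfect field `K` inside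
a fixed algebraic closure. If some field `E` in the unique descending chain of `L/K`, different
from both `L` and `K`, coincides with one of the fields in the unique ascending chain of `L/K`,
then `L/K` is primitive. -/
theorem primitive_of_descChain_meets_ascChain
    (K Kbar : Type*) [Field K] [PerfectField K] [Field Kbar] [Algebra K Kbar]
    [IsAlgClosure K Kbar]
    (L : IntermediateField K Kbar) [FiniteDimensional K ↥L] (hL : L ≠ ⊥)
    (E : IntermediateField K Kbar)
    (hdesc : InDescChain K Kbar L E) (hasc : InAscChain K Kbar L E)
    (hEL : E ≠ L) (hEK : E ≠ ⊥) :
    IsPrimitive K Kbar L := by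
  rintro ⟨L₀, F, ⟨hle, h2, hFfin, hFgal, hdisj, hsup⟩, hFne⟩
  classical
  open SCMaux SCMaux2 in
  haveI : Normal K Kbar := inferInstance
  have hFL : F ≤ L := hsup ▸ le_sup_right
  have hL₀L : L₀ ≤ L := hsup ▸ le_sup_left
  have hFE : F ≤ E := (SCMaux2.asc_le hFL hFgal hasc).resolve_left hEK
  rcases Relation.ReflTransGen.cases_head hdesc with heq | ⟨N₁, hstep, hchain⟩
  · exact hEL heq.symm
  have hEN₁ : E ≤ N₁ := SCMaux2.desc_le hchain
  obtain ⟨M, hML, hMpair, hMmin⟩ := SCMaux2.exists_min_galois_under L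
  have hN₁L : N₁ ≤ L := hstep.1
  have hN₁pair : IsGaloisPair K Kbar N₁ L := hstep.2.1
  have hMN₁ : M ≤ N₁ := hMmin N₁ hN₁L hN₁pair
  have hL₀GP : SCMaux.GPgood L₀ L := by
    intro τ hτ
    rw [← hsup, IntermediateField.map_sup, SCMaux.map_eq_of_fixes τ hτ,
      normal_iff_forall_map_eq'.mp hFgal.to_normal τ]
  have hL₀pair : IsGaloisPair K Kbar L₀ L := SCMaux.pair_of_GPgood hL₀L hL₀GP
  have hML₀ : M ≤ L₀ := hMmin L₀ hL₀L hL₀pair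
  have hrank : Module.finrank K ↥N₁ ≤ Module.finrank K ↥M := hstep.2.2 M hML hMpair
  haveI : FiniteDimensional K ↥N₁ := SCMaux.findim_of_le hN₁L
  have hMeq : M = N₁ := IntermediateField.eq_of_le_of_finrank_le hMN₁ hrank
  have hFL₀ : F ≤ L₀ := by
    have h1 : F ≤ N₁ := hFE.trans hEN₁
    rw [← hMeq] at h1
    exact h1.trans hML₀
  have hgc : L₀ ≤ galClosure K Kbar L₀ := IntermediateField.le_normalClosure L₀
  have hFbot : F ≤ (⊥ : IntermediateField K Kbar) := by
    rw [← hdisj]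
    exact le_inf (hFL₀.trans hgc) le_rfl
  exact hFne (le_antisymm hFbot bot_le)
end

section
/- Suppose M/K is obtained by strong general magnification from a subextension L/K through J/K (so [L:K] > 1, L̃ ∩ J̃ = K and LJ = M). If M/K is Galois, then L/K and J/K are both Galois, and moreover if [L:K] > 2 then M/K is obtained by strong cluster magnification from L/K through J/K. -/
open IntermediateField Module

section Helpers
variable {K Kbar : Type*} [Field K] [Field Kbar] [Algebra K Kbar]

example (L : IntermediateField K Kbar) :
    (⨆ f : ↥L →ₐ[K] Kbar, f.fieldRange) = normalClosure K (↥L) Kbar := rfl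

lemma my_map_val_comap_val (M S : IntermediateField K Kbar) (h : S ≤ M) :
    (IntermediateField.comap M.val S).map M.val = S := by
  ext x
  show (∃ y, y ∈ IntermediateField.comap M.val S ∧ M.val y = x) ↔ x ∈ S
  constructor
  · rintro ⟨y, hy, rfl⟩; exact hy
  · intro hx; exact ⟨⟨x, h hx⟩, hx, rfl⟩

lemma my_card_mul_card {G : Type*} [Group G] (H N : Subgroup G) [N.Normal]
    (h1 : H ⊓ N = ⊥) (h2 : H ⊔ N = ⊤) : Nat.card H * Nat.card N = Nat.card G :=
  (Subgroup.isComplement'_of_disjoint_and_mul_eq_univ (disjoint_iff.mpr h1)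
    (by rw [← Subgroup.mul_normal, h2, Subgroup.coe_top])).card_mul

variable {M : Type*} [Field M] [Algebra K M]

lemma my_fixingSubgroup_sup (E F : IntermediateField K M) :
    (E ⊔ F).fixingSubgroup = E.fixingSubgroup ⊓ F.fixingSubgroup := by
  have key : ∀ H : Subgroup (M ≃ₐ[K] M),
      H ≤ (E ⊔ F).fixingSubgroup ↔ H ≤ E.fixingSubgroup ⊓ F.fixingSubgroup := by
    intro H
    rw [← IntermediateField.le_iff_le, le_inf_iff, ← IntermediateField.le_iff_le,
      ← IntermediateField.le_iff_le, sup_le_iff]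
  exact le_antisymm ((key _).mp le_rfl) ((key _).mpr le_rfl)

lemma my_fixedField_sup (H N : Subgroup (M ≃ₐ[K] M)) :
    IntermediateField.fixedField (H ⊔ N) =
      IntermediateField.fixedField H ⊓ IntermediateField.fixedField N := by
  have key : ∀ E : IntermediateField K M,
      E ≤ IntermediateField.fixedField (H ⊔ N) ↔
        E ≤ IntermediateField.fixedField H ⊓ IntermediateField.fixedField N := by
    intro E
    rw [IntermediateField.le_iff_le, le_inf_iff, IntermediateField.le_iff_le,
      IntermediateField.le_iff_le, sup_le_iff]
  exact le_antisymm ((key _).mp le_rfl) ((key _).mpr le_rfl)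

lemma my_fixingSubgroup_bot :
    (⊥ : IntermediateField K M).fixingSubgroup = ⊤ := by
  ext σ
  simp only [Subgroup.mem_top, iff_true, IntermediateField.fixingSubgroup,
    mem_fixingSubgroup_iff]
  rintro x hx
  obtain ⟨k, rfl⟩ := IntermediateField.mem_bot.mp hx
  exact σ.commutes k

lemma my_fixingSubgroup_top :
    (⊤ : IntermediateField K M).fixingSubgroup = ⊥ := by
  ext σ
  simp only [IntermediateField.fixingSubgroup, mem_fixingSubgroup_iff, Subgroup.mem_bot]
  constructor
  · intro h
    ext x
    exact h x trivial
  · rintro rfl x _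
    rfl

end Helpers


set_option maxHeartbeats 1000000 in
set_option synthInstance.maxHeartbeats 400000 in
/-- Suppose `M/K` is obtained by strong general magnification from `L/K`
through `J/K`.  If `M/K` is Galois, then `L/K` and `J/K` are both Galois, and moreover if
`[L:K] > 2` then `M/K` is obtained by strong cluster magnification from `L/K` through `J/K`. -/
theorem strong_general_magnification_galois_descends
    (K Kbar : Type*) [Field K] [PerfectField K] [Field Kbar] [Algebra K Kbar]
    [IsAlgClosure K Kbar]
    (M L J : IntermediateField K Kbar) [FiniteDimensional K ↥M]
    (h : IsSGMvia K Kbar M L J) (hM : IsGalois K ↥M) :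
    IsGalois K ↥L ∧ IsGalois K ↥J ∧
      (2 < Module.finrank K ↥L → IsSCMvia K Kbar M L J) := by
  

  have hLM : L ≤ M := h.1
  have hL1 : 1 < Module.finrank K ↥L := h.2.1
  haveI hJfd : FiniteDimensional K ↥J := h.2.2.1
  have hinf : normalClosure K (↥L) Kbar ⊓ normalClosure K (↥J) Kbar = ⊥ := h.2.2.2.1
  have hsup : L ⊔ J = M := h.2.2.2.2

  haveI := hM
  haveI : FiniteDimensional K ↥L :=
    FiniteDimensional.of_injective (IntermediateField.inclusion hLM).toLinearMap
      (IntermediateField.inclusion hLM).injective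
  have hJM : J ≤ M := by rw [← hsup]; exact le_sup_right
  have hLE : L ≤ normalClosure K (↥L) Kbar := IntermediateField.le_normalClosure L
  have hJF : J ≤ normalClosure K (↥J) Kbar := IntermediateField.le_normalClosure J
  haveI : Normal K ↥M := hM.to_normal
  have hEM : normalClosure K (↥L) Kbar ≤ M :=
    IntermediateField.normalClosure_le_iff_of_normal.mpr hLM
  have hFM : normalClosure K (↥J) Kbar ≤ M :=
    IntermediateField.normalClosure_le_iff_of_normal.mpr hJM
  have hEFsup : normalClosure K (↥L) Kbar ⊔ normalClosure K (↥J) Kbar = M :=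
    le_antisymm (sup_le hEM hFM)
      (by rw [← hsup]; exact sup_le (hLE.trans le_sup_left) (hJF.trans le_sup_right))
  set E' := IntermediateField.comap M.val (normalClosure K (↥L) Kbar) with hE'
  set F' := IntermediateField.comap M.val (normalClosure K (↥J) Kbar) with hF'
  have hmapE : E'.map M.val = normalClosure K (↥L) Kbar := my_map_val_comap_val M _ hEM
  have hmapF : F'.map M.val = normalClosure K (↥J) Kbar := my_map_val_comap_val M _ hFM
  have equivE : ↥E' ≃ₐ[K] ↥(normalClosure K (↥L) Kbar) :=
    (IntermediateField.equivMap E' M.val).trans (IntermediateField.equivOfEq hmapE)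
  have equivF : ↥F' ≃ₐ[K] ↥(normalClosure K (↥J) Kbar) :=
    (IntermediateField.equivMap F' M.val).trans (IntermediateField.equivOfEq hmapF)
  have hinf' : E' ⊓ F' = ⊥ := IntermediateField.map_injective M.val
    (by rw [IntermediateField.map_inf, hmapE, hmapF, hinf, IntermediateField.map_bot])
  have hmaptop : (⊤ : IntermediateField K ↥M).map M.val = M := by
    ext x
    show (∃ y : ↥M, y ∈ (⊤ : IntermediateField K ↥M) ∧ M.val y = x) ↔ x ∈ M
    constructor
    · rintro ⟨y, -, rfl⟩; exact y.2
    · intro hx; exact ⟨⟨x, hx⟩, trivial, rfl⟩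
  have hsup' : E' ⊔ F' = ⊤ := IntermediateField.map_injective M.val
    (by rw [IntermediateField.map_sup, hmapE, hmapF, hEFsup, hmaptop])

  -- normality and Galois instances
  haveI : Normal K ↥E' := Normal.of_algEquiv equivE.symm
  haveI : Normal K ↥F' := Normal.of_algEquiv equivF.symm
  haveI : FiniteDimensional K ↥E' :=
    FiniteDimensional.of_injective E'.val.toLinearMap E'.val.injective
  haveI : FiniteDimensional K ↥F' :=
    FiniteDimensional.of_injective F'.val.toLinearMap F'.val.injective
  haveI : IsGalois K ↥E' := ⟨⟩
  haveI : IsGalois K ↥F' := ⟨⟩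
  have hHinf : E'.fixingSubgroup ⊓ F'.fixingSubgroup = ⊥ := by
    rw [← my_fixingSubgroup_sup, hsup', my_fixingSubgroup_top]
  have hHsup : E'.fixingSubgroup ⊔ F'.fixingSubgroup = ⊤ := by
    have h1 : IntermediateField.fixedField (E'.fixingSubgroup ⊔ F'.fixingSubgroup) = ⊥ := by
      rw [my_fixedField_sup, IsGalois.fixedField_fixingSubgroup,
        IsGalois.fixedField_fixingSubgroup, hinf']
    rw [← IntermediateField.fixingSubgroup_fixedField (E'.fixingSubgroup ⊔ F'.fixingSubgroup),
      h1, my_fixingSubgroup_bot]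
  have hcard := my_card_mul_card E'.fixingSubgroup F'.fixingSubgroup hHinf hHsup
  have hHE : Nat.card E'.fixingSubgroup = finrank (↥E') ↥M := by
    rw [Nat.card_congr (IntermediateField.fixingSubgroupEquiv E').toEquiv,
      IsGalois.card_aut_eq_finrank]
  have hHF : Nat.card F'.fixingSubgroup = finrank (↥F') ↥M := by
    rw [Nat.card_congr (IntermediateField.fixingSubgroupEquiv F').toEquiv,
      IsGalois.card_aut_eq_finrank]
  have hGcard : Nat.card (↥M ≃ₐ[K] ↥M) = finrank K ↥M := by
    rw [IsGalois.card_aut_eq_finrank]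
  rw [hHE, hHF, hGcard] at hcard
  have htowerE : finrank K ↥E' * finrank (↥E') ↥M = finrank K ↥M :=
    finrank_mul_finrank K (↥E') ↥M
  have htowerF : finrank K ↥F' * finrank (↥F') ↥M = finrank K ↥M :=
    finrank_mul_finrank K (↥F') ↥M

  -- degrees
  have hm0 : 0 < finrank K ↥M := finrank_pos
  have hEfull : finrank K ↥E' * finrank K ↥F' = finrank K ↥M := by
    have h2 : (finrank K ↥E' * finrank K ↥F') * finrank K ↥M
        = finrank K ↥M * finrank K ↥M := by
      calc (finrank K ↥E' * finrank K ↥F') * finrank K ↥M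
          = (finrank K ↥E' * finrank K ↥F') * (finrank (↥E') ↥M * finrank (↥F') ↥M) := by
            rw [hcard]
        _ = (finrank K ↥E' * finrank (↥E') ↥M) * (finrank K ↥F' * finrank (↥F') ↥M) := by ring
        _ = finrank K ↥M * finrank K ↥M := by rw [htowerE, htowerF]
    exact Nat.eq_of_mul_eq_mul_right hm0 h2
  have hrankE : finrank K ↥E' = finrank K ↥(normalClosure K (↥L) Kbar) :=
    equivE.toLinearEquiv.finrank_eq
  have hrankF : finrank K ↥F' = finrank K ↥(normalClosure K (↥J) Kbar) :=
    equivF.toLinearEquiv.finrank_eq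
  haveI : FiniteDimensional K ↥(normalClosure K (↥L) Kbar) :=
    FiniteDimensional.of_injective (IntermediateField.inclusion hEM).toLinearMap
      (IntermediateField.inclusion hEM).injective
  haveI : FiniteDimensional K ↥(normalClosure K (↥J) Kbar) :=
    FiniteDimensional.of_injective (IntermediateField.inclusion hFM).toLinearMap
      (IntermediateField.inclusion hFM).injective
  have haE : finrank K ↥L ≤ finrank K ↥(normalClosure K (↥L) Kbar) :=
    LinearMap.finrank_le_finrank_of_injective
      (f := (IntermediateField.inclusion hLE).toLinearMap)
      (IntermediateField.inclusion hLE).injective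
  have hbF : finrank K ↥J ≤ finrank K ↥(normalClosure K (↥J) Kbar) :=
    LinearMap.finrank_le_finrank_of_injective
      (f := (IntermediateField.inclusion hJF).toLinearMap)
      (IntermediateField.inclusion hJF).injective
  have hmle : finrank K ↥M ≤ finrank K ↥L * finrank K ↥J := by
    rw [← hsup]; exact IntermediateField.finrank_sup_le L J
  have hEfull' : finrank K ↥(normalClosure K (↥L) Kbar) * finrank K ↥(normalClosure K (↥J) Kbar)
      = finrank K ↥M := by rw [← hrankE, ← hrankF]; exact hEfull
  have hb0 : 0 < finrank K ↥J := finrank_pos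
  have he0 : 0 < finrank K ↥(normalClosure K (↥L) Kbar) := finrank_pos
  -- squeeze
  have hseq : finrank K ↥(normalClosure K (↥L) Kbar) * finrank K ↥(normalClosure K (↥J) Kbar)
      ≤ finrank K ↥L * finrank K ↥J := hEfull' ▸ hmle
  have hab : finrank K ↥L * finrank K ↥J
      = finrank K ↥(normalClosure K (↥L) Kbar) * finrank K ↥(normalClosure K (↥J) Kbar) :=
    le_antisymm (Nat.mul_le_mul haE hbF) hseq
  have h1 : finrank K ↥L * finrank K ↥J
      ≤ finrank K ↥(normalClosure K (↥L) Kbar) * finrank K ↥J :=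
    Nat.mul_le_mul_right _ haE
  have h2 : finrank K ↥(normalClosure K (↥L) Kbar) * finrank K ↥J
      ≤ finrank K ↥(normalClosure K (↥L) Kbar) * finrank K ↥(normalClosure K (↥J) Kbar) :=
    Nat.mul_le_mul_left _ hbF
  have haeq : finrank K ↥L = finrank K ↥(normalClosure K (↥L) Kbar) :=
    Nat.eq_of_mul_eq_mul_right hb0 (le_antisymm h1 (by omega))
  have hbeq : finrank K ↥J = finrank K ↥(normalClosure K (↥J) Kbar) :=
    Nat.eq_of_mul_eq_mul_left he0 (le_antisymm h2 (by omega))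
  have hLeq : L = normalClosure K (↥L) Kbar :=
    IntermediateField.eq_of_le_of_finrank_le hLE haeq.ge
  have hJeq : J = normalClosure K (↥J) Kbar :=
    IntermediateField.eq_of_le_of_finrank_le hJF hbeq.ge
  have hLgal : IsGalois K ↥L := by
    haveI : Normal K ↥L := by rw [hLeq]; infer_instance
    exact ⟨⟩
  have hJgal : IsGalois K ↥J := by
    haveI : Normal K ↥J := by rw [hJeq]; infer_instance
    exact ⟨⟩
  have hinfJ : galClosure K Kbar L ⊓ J = ⊥ := by rw [hJeq]; exact hinf
  exact ⟨hLgal, hJgal, fun h2 => ⟨hLM, h2, hJfd, hJgal, hinfJ, hsup⟩⟩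
end

section
/- (General Magnification) Let M/K be obtained by strong general magnification from L/K through J/K, with magnification tuple (r, s, t, u) = (r_K(J), s_K(J), t_K(J), u_K(J)). Then [M:K] = r·s·[L:K] = t·u·[L:K], and r_K(M) = r·r_K(L), s_K(M) = s·s_K(L), t_K(M) = t·t_K(L), u_K(M) = u·u_K(L). -/
open IntermediateField Module

section GroupAux

variable {G G₁ G₂ : Type*} [Group G] [Group G₁] [Group G₂]

theorem my_normalizer_prod (A : Subgroup G₁) (B : Subgroup G₂) :
    Subgroup.normalizer ((A.prod B : Subgroup (G₁ × G₂)) : Set (G₁ × G₂)) = (Subgroup.normalizer (A : Set G₁)).prod (Subgroup.normalizer (B : Set G₂)) := by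
  ext ⟨g₁, g₂⟩
  simp only [Subgroup.mem_normalizer_iff, Subgroup.mem_prod, Prod.forall, Prod.mk_mul_mk,
    Prod.inv_mk]
  constructor
  · intro h
    refine ⟨fun a => ?_, fun b => ?_⟩
    · simpa [B.one_mem] using h a 1
    · simpa [A.one_mem] using h 1 b
  · rintro ⟨h1, h2⟩ a b
    exact and_congr (h1 a) (h2 b)

theorem my_normalClosure_prod (A : Subgroup G₁) (B : Subgroup G₂) :
    Subgroup.normalClosure ((A.prod B : Subgroup (G₁ × G₂)) : Set (G₁ × G₂)) =
      (Subgroup.normalClosure (A : Set G₁)).prod (Subgroup.normalClosure (B : Set G₂)) := by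
  refine le_antisymm ?_ ?_
  · refine Subgroup.normalClosure_le_normal ?_
    rintro x ⟨h1, h2⟩
    exact ⟨Subgroup.le_normalClosure h1, Subgroup.le_normalClosure h2⟩
  · set N := Subgroup.normalClosure ((A.prod B : Subgroup (G₁ × G₂)) : Set (G₁ × G₂)) with hN
    haveI hNn : N.Normal := Subgroup.normalClosure_normal
    have h1 : ∀ x ∈ Subgroup.normalClosure (A : Set G₁), ((x, 1) : G₁ × G₂) ∈ N := by
      have : Subgroup.normalClosure (A : Set G₁) ≤ N.comap (MonoidHom.inl G₁ G₂) := by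
        haveI : (N.comap (MonoidHom.inl G₁ G₂)).Normal := hNn.comap _
        refine Subgroup.normalClosure_le_normal ?_
        intro a ha
        exact Subgroup.le_normalClosure (⟨ha, B.one_mem⟩ : ((a,1) : G₁ × G₂) ∈ A.prod B)
      exact fun x hx => this hx
    have h2 : ∀ y ∈ Subgroup.normalClosure (B : Set G₂), ((1, y) : G₁ × G₂) ∈ N := by
      have : Subgroup.normalClosure (B : Set G₂) ≤ N.comap (MonoidHom.inr G₁ G₂) := by
        haveI : (N.comap (MonoidHom.inr G₁ G₂)).Normal := hNn.comap _
        refine Subgroup.normalClosure_le_normal ?_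
        intro b hb
        exact Subgroup.le_normalClosure (⟨A.one_mem, hb⟩ : ((1,b) : G₁ × G₂) ∈ A.prod B)
      exact fun y hy => this hy
    rintro ⟨x, y⟩ ⟨hx, hy⟩
    have : ((x, y) : G₁ × G₂) = (x, 1) * (1, y) := by simp
    rw [this]
    exact N.mul_mem (h1 x hx) (h2 y hy)

theorem my_relIndex_prod (A C : Subgroup G₁) (B D : Subgroup G₂) :
    (A.prod B).relIndex (C.prod D) = A.relIndex C * B.relIndex D := by
  have hsurj : Function.Surjective ⇑(C.prodEquiv D).toMonoidHom := (C.prodEquiv D).surjective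
  have hcomap : Subgroup.comap (C.prodEquiv D).toMonoidHom
      ((A.subgroupOf C).prod (B.subgroupOf D)) = (A.prod B).subgroupOf (C.prod D) := by
    ext x
    simp only [Subgroup.mem_comap, Subgroup.mem_subgroupOf, Subgroup.mem_prod]
    rfl
  rw [Subgroup.relIndex, Subgroup.relIndex, Subgroup.relIndex, ← Subgroup.index_prod,
    ← hcomap, Subgroup.index_comap_of_surjective _ hsurj]

theorem my_index_map_equiv (e : G ≃* G₁) (H : Subgroup G) :
    (H.map (e : G →* G₁)).index = H.index := by
  refine Subgroup.index_map_eq H e.surjective ?_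
  rw [(MonoidHom.ker_eq_bot_iff _).mpr e.injective]
  exact bot_le

theorem my_map_normalizer (e : G ≃* G₁) (H : Subgroup G) :
    (Subgroup.normalizer (H : Set G)).map (e : G →* G₁) = Subgroup.normalizer ((H.map (e : G →* G₁) : Subgroup G₁) : Set G₁) := by
  rw [Subgroup.map_equiv_eq_comap_symm, Subgroup.map_equiv_eq_comap_symm]
  exact Subgroup.comap_normalizer_eq_of_surjective H e.symm.surjective

theorem my_map_symm_map (e : G ≃* G₁) (H : Subgroup G) :
    (H.map (e : G →* G₁)).map (e.symm : G₁ →* G) = H := by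
  rw [Subgroup.map_map]
  have : ((e.symm : G₁ →* G).comp (e : G →* G₁)) = MonoidHom.id G := by
    ext x; simp
  rw [this, Subgroup.map_id]

theorem my_relIndex_map_equiv (e : G ≃* G₁) (H K : Subgroup G) :
    (H.map (e : G →* G₁)).relIndex (K.map (e : G →* G₁)) = H.relIndex K := by
  rw [Subgroup.map_equiv_eq_comap_symm e H, Subgroup.relIndex_comap, my_map_symm_map]

theorem my_map_normalClosure_equiv (e : G ≃* G₁) (H : Subgroup G) :
    (Subgroup.normalClosure (H : Set G)).map (e : G →* G₁)
      = Subgroup.normalClosure ((H.map (e : G →* G₁) : Subgroup G₁) : Set G₁) := by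
  have hc : (⇑(e : G →* G₁) '' (H : Set G)) = ((H.map (e : G →* G₁) : Subgroup G₁) : Set G₁) :=
    (Subgroup.coe_map _ _).symm
  rw [Subgroup.map_normalClosure _ _ e.surjective, hc]

theorem magn_core (e : G ≃* G₁ × G₂) (H : Subgroup G) (H₁ : Subgroup G₁) (H₂ : Subgroup G₂)
    (hmap : H.map (e : G →* G₁ × G₂) = H₁.prod H₂) :
    H.index = H₁.index * H₂.index ∧
    H.relIndex (Subgroup.normalizer (H : Set G)) = H₁.relIndex (Subgroup.normalizer (H₁ : Set G₁)) * H₂.relIndex (Subgroup.normalizer (H₂ : Set G₂)) ∧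
    (Subgroup.normalizer (H : Set G)).index = (Subgroup.normalizer (H₁ : Set G₁)).index * (Subgroup.normalizer (H₂ : Set G₂)).index ∧
    (Subgroup.normalClosure (H : Set G)).index
      = (Subgroup.normalClosure (H₁ : Set G₁)).index
        * (Subgroup.normalClosure (H₂ : Set G₂)).index ∧
    H.relIndex (Subgroup.normalClosure (H : Set G))
      = H₁.relIndex (Subgroup.normalClosure (H₁ : Set G₁))
        * H₂.relIndex (Subgroup.normalClosure (H₂ : Set G₂)) := by
  have hNorm : (Subgroup.normalizer (H : Set G)).map (e : G →* G₁ × G₂) = (Subgroup.normalizer (H₁ : Set G₁)).prod (Subgroup.normalizer (H₂ : Set G₂)) := by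
    rw [my_map_normalizer, hmap, my_normalizer_prod]
  have hNcl : (Subgroup.normalClosure (H : Set G)).map (e : G →* G₁ × G₂)
      = (Subgroup.normalClosure (H₁ : Set G₁)).prod (Subgroup.normalClosure (H₂ : Set G₂)) := by
    rw [my_map_normalClosure_equiv, hmap, my_normalClosure_prod]
  refine ⟨?_, ?_, ?_, ?_, ?_⟩
  · rw [← my_index_map_equiv e H, hmap, Subgroup.index_prod]
  · rw [← my_relIndex_map_equiv e H (Subgroup.normalizer (H : Set G)), hmap, hNorm, my_relIndex_prod]
  · rw [← my_index_map_equiv e (Subgroup.normalizer (H : Set G)), hNorm, Subgroup.index_prod]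
  · rw [← my_index_map_equiv e (Subgroup.normalClosure (H : Set G)), hNcl, Subgroup.index_prod]
  · rw [← my_relIndex_map_equiv e H (Subgroup.normalClosure (H : Set G)), hmap, hNcl,
      my_relIndex_prod]

end GroupAux

section FieldAux

open IntermediateField Module

variable {K Kbar : Type*} [Field K] [Field Kbar] [Algebra K Kbar]

lemma galClosure_eq (L : IntermediateField K Kbar) :
    galClosure K Kbar L = normalClosure K (↥L) Kbar := rfl

lemma le_galClosure (L : IntermediateField K Kbar) : L ≤ galClosure K Kbar L :=
  IntermediateField.le_normalClosure L

instance galClosure_normal [Normal K Kbar] (L : IntermediateField K Kbar) :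
    Normal K ↥(galClosure K Kbar L) :=
  inferInstanceAs (Normal K ↥(normalClosure K (↥L) Kbar))

lemma galClosure_fd (L : IntermediateField K Kbar) [FiniteDimensional K ↥L] :
    FiniteDimensional K ↥(galClosure K Kbar L) :=
  inferInstanceAs (FiniteDimensional K ↥(normalClosure K (↥L) Kbar))

lemma galClosure_le_of_normal [Normal K Kbar] {L N : IntermediateField K Kbar} (h : L ≤ N)
    [Normal K ↥N] : galClosure K Kbar L ≤ N :=
  (IntermediateField.normalClosure_le_iff_of_normal).mpr h

lemma galClosure_mono [Normal K Kbar] {L L' : IntermediateField K Kbar} (h : L ≤ L') :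
    galClosure K Kbar L ≤ galClosure K Kbar L' :=
  IntermediateField.normalClosure_mono L L' h

lemma galClosure_sup [Normal K Kbar] (L J : IntermediateField K Kbar) :
    galClosure K Kbar (L ⊔ J) = galClosure K Kbar L ⊔ galClosure K Kbar J := by
  refine le_antisymm ?_ ?_
  · exact galClosure_le_of_normal
      (sup_le (le_sup_of_le_left (le_galClosure L)) (le_sup_of_le_right (le_galClosure J)))
  · exact sup_le (galClosure_mono le_sup_left) (galClosure_mono le_sup_right)

/-- `A` viewed as an intermediate field of `N / K`. -/
noncomputable def underEquiv (A N : IntermediateField K Kbar) (h : A ≤ N) :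
    ↥(IntermediateField.comap N.val A) ≃ₐ[K] ↥A :=
  ((IntermediateField.comap N.val A).equivMap N.val).trans (IntermediateField.equivOfEq (by
    rw [IntermediateField.map_comap_eq, IntermediateField.fieldRange_val, inf_of_le_left h]))

lemma coe_underEquiv (A N : IntermediateField K Kbar) (h : A ≤ N)
    (x : ↥(IntermediateField.comap N.val A)) :
    (underEquiv A N h x : Kbar) = ((x : ↥N) : Kbar) := rfl

lemma underEquiv_symm_coe (A N : IntermediateField K Kbar) (h : A ≤ N) (x : ↥A) :
    (((underEquiv A N h).symm x : ↥N) : Kbar) = (x : Kbar) := by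
  conv_rhs => rw [← (underEquiv A N h).apply_symm_apply x]
  rw [coe_underEquiv]

end FieldAux

section FieldAux2

open IntermediateField Module

variable {K Kbar : Type*} [Field K] [Field Kbar] [Algebra K Kbar]

lemma normal_comap (A N : IntermediateField K Kbar) (h : A ≤ N) [Normal K ↥A] :
    Normal K ↥(IntermediateField.comap N.val A) :=
  Normal.of_algEquiv (underEquiv A N h).symm

/-- Restriction of automorphisms to a normal subextension. -/
noncomputable def resHom (A N : IntermediateField K Kbar) (h : A ≤ N)
    [Normal K ↥A] [Normal K ↥N] : (↥N ≃ₐ[K] ↥N) →* (↥A ≃ₐ[K] ↥A) :=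
  haveI : Normal K ↥(IntermediateField.comap N.val A) := normal_comap A N h
  (AlgEquiv.autCongr (underEquiv A N h)).toMonoidHom.comp
    (AlgEquiv.restrictNormalHom (F := K) (K₁ := ↥N) ↥(IntermediateField.comap N.val A))

lemma resHom_coe (A N : IntermediateField K Kbar) (h : A ≤ N)
    [Normal K ↥A] [Normal K ↥N] (σ : ↥N ≃ₐ[K] ↥N) (x : ↥A) :
    ((resHom A N h σ) x : Kbar) = ((σ (IntermediateField.inclusion h x) : ↥N) : Kbar) := by
  haveI : Normal K ↥(IntermediateField.comap N.val A) := normal_comap A N h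
  set e := underEquiv A N h
  set z := e.symm x with hz
  have h1 : (resHom A N h σ) x
      = e ((AlgEquiv.restrictNormalHom (F := K) (K₁ := ↥N)
          ↥(IntermediateField.comap N.val A) σ) z) := rfl
  rw [h1, coe_underEquiv]
  have h2 : ((AlgEquiv.restrictNormalHom (F := K) (K₁ := ↥N)
      ↥(IntermediateField.comap N.val A) σ) z : ↥N) = σ ↑z :=
    AlgEquiv.restrictNormalHom_apply (IntermediateField.comap N.val A) σ z
  rw [h2]
  have h3 : (z : ↥N) = IntermediateField.inclusion h x := by
    apply Subtype.coe_injective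
    show ((z : ↥N) : Kbar) = ((IntermediateField.inclusion h x : ↥N) : Kbar)
    rw [IntermediateField.coe_inclusion]
    exact underEquiv_symm_coe A N h x
  rw [h3]

lemma resHom_surjective (A N : IntermediateField K Kbar) (h : A ≤ N)
    [Normal K ↥A] [Normal K ↥N] : Function.Surjective (resHom A N h) := by
  haveI : Normal K ↥(IntermediateField.comap N.val A) := normal_comap A N h
  exact (AlgEquiv.autCongr (underEquiv A N h)).surjective.comp
    (AlgEquiv.restrictNormalHom_surjective (↥N))

end FieldAux2

section FieldAux3

open IntermediateField Module

variable {F E : Type*} [Field F] [Field E] [Algebra F E]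

lemma fixingSubgroup_inf_le (A B : IntermediateField F E) :
    A.fixingSubgroup ⊓ B.fixingSubgroup ≤ (A ⊔ B).fixingSubgroup := by
  intro σ hσ
  have hA : Subgroup.zpowers σ ≤ A.fixingSubgroup := Subgroup.zpowers_le.mpr hσ.1
  have hB : Subgroup.zpowers σ ≤ B.fixingSubgroup := Subgroup.zpowers_le.mpr hσ.2
  have hsup : A ⊔ B ≤ IntermediateField.fixedField (Subgroup.zpowers σ) :=
    sup_le ((IntermediateField.le_iff_le _ _).mpr hA) ((IntermediateField.le_iff_le _ _).mpr hB)
  exact Subgroup.zpowers_le.mp ((IntermediateField.le_iff_le _ _).mp hsup)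

lemma fixingSubgroup_top_eq : (⊤ : IntermediateField F E).fixingSubgroup = ⊥ := by
  ext σ
  simp only [Subgroup.mem_bot]
  rw [IntermediateField.mem_fixingSubgroup_iff]
  constructor
  · intro h
    exact AlgEquiv.ext fun x => h x trivial
  · rintro rfl x _
    rfl

lemma fixingSubgroup_bot_eq : (⊥ : IntermediateField F E).fixingSubgroup = ⊤ := by
  rw [eq_top_iff]
  intro σ _
  rw [IntermediateField.mem_fixingSubgroup_iff]
  intro x hx
  rw [IntermediateField.mem_bot] at hx
  obtain ⟨k, rfl⟩ := hx
  exact σ.commutes k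

lemma fixingSubgroup_index_eq [FiniteDimensional F E] [IsGalois F E]
    (T : IntermediateField F E) : T.fixingSubgroup.index = Module.finrank F ↥T := by
  have h1 : T.fixingSubgroup.index * Nat.card T.fixingSubgroup = Nat.card (E ≃ₐ[F] E) :=
    T.fixingSubgroup.index_mul_card
  have h2 : Nat.card T.fixingSubgroup = Module.finrank (↥T) E := by
    rw [Nat.card_congr (IntermediateField.fixingSubgroupEquiv T).toEquiv]
    exact IsGalois.card_aut_eq_finrank (↥T) E
  have h3 : Nat.card (E ≃ₐ[F] E) = Module.finrank F E := by
    exact IsGalois.card_aut_eq_finrank F E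
  have h4 : Module.finrank F ↥T * Module.finrank (↥T) E = Module.finrank F E :=
    Module.finrank_mul_finrank F (↥T) E
  have h5 : 0 < Module.finrank (↥T) E := Module.finrank_pos
  apply Nat.eq_of_mul_eq_mul_right h5
  rw [h2, h3, ← h4] at h1
  exact h1

end FieldAux3

section FieldAux4

open IntermediateField Module

variable {K Kbar : Type*} [Field K] [Field Kbar] [Algebra K Kbar]

lemma IntermediateField.mem_comap' {L L' : Type*} [Field L] [Field L'] [Algebra K L]
    [Algebra K L'] {f : L →ₐ[K] L'} {S : IntermediateField K L'} {x : L} :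
    x ∈ IntermediateField.comap f S ↔ f x ∈ S := Iff.rfl

lemma comap_val_self (N : IntermediateField K Kbar) :
    IntermediateField.comap N.val N = ⊤ := by
  refine eq_top_iff.mpr fun x _ => ?_
  exact x.2

lemma comap_val_sup {A B N : IntermediateField K Kbar} (hA : A ≤ N) (hB : B ≤ N) :
    IntermediateField.comap N.val A ⊔ IntermediateField.comap N.val B
      = IntermediateField.comap N.val (A ⊔ B) := by
  apply IntermediateField.map_injective N.val
  rw [IntermediateField.map_sup, IntermediateField.map_comap_eq, IntermediateField.map_comap_eq,
    IntermediateField.map_comap_eq, IntermediateField.fieldRange_val,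
    inf_of_le_left hA, inf_of_le_left hB, inf_of_le_left (sup_le hA hB)]

lemma finrank_comap_val (A N : IntermediateField K Kbar) (h : A ≤ N) :
    Module.finrank K ↥(IntermediateField.comap N.val A) = Module.finrank K ↥A :=
  (underEquiv A N h).toLinearEquiv.finrank_eq

end FieldAux4

section FieldAux5

open IntermediateField Module

variable {K Kbar : Type*} [Field K] [Field Kbar] [Algebra K Kbar]

lemma mem_comap_of {A N : IntermediateField K Kbar} (hAN : A ≤ N)
    {B : IntermediateField K Kbar} (x : ↥A) (hx : (x : Kbar) ∈ B) :
    (IntermediateField.inclusion hAN x) ∈ IntermediateField.comap N.val B := by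
  rw [IntermediateField.mem_comap']
  show ((IntermediateField.inclusion hAN x : ↥N) : Kbar) ∈ B
  rw [IntermediateField.coe_inclusion]
  exact hx

lemma mem_of_mem_comap {A N : IntermediateField K Kbar} (hAN : A ≤ N)
    {B : IntermediateField K Kbar} (x : ↥A)
    (hx : (IntermediateField.inclusion hAN x) ∈ IntermediateField.comap N.val B) :
    (x : Kbar) ∈ B := by
  rw [IntermediateField.mem_comap'] at hx
  have h2 : N.val (IntermediateField.inclusion hAN x) = (x : Kbar) :=
    IntermediateField.coe_inclusion hAN x
  rwa [h2] at hx

lemma mem_inf_iff {A B : IntermediateField K Kbar} {x : Kbar} :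
    x ∈ A ⊓ B ↔ x ∈ A ∧ x ∈ B := Iff.rfl

end FieldAux5


/-- (General Magnification) Let `M/K` be obtained by strong general
magnification from `L/K` through `J/K`, with magnification tuple
`(r, s, t, u) = (r_K(J), s_K(J), t_K(J), u_K(J))`.  Then
`[M:K] = r·s·[L:K] = t·u·[L:K]`, `r_K(M) = r·r_K(L)`, `s_K(M) = s·s_K(L)`,
`t_K(M) = t·t_K(L)` and `u_K(M) = u·u_K(L)`. -/
theorem general_magnification_multiplicativity
    (K Kbar : Type*) [Field K] [PerfectField K] [Field Kbar] [Algebra K Kbar]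
    [IsAlgClosure K Kbar]
    (M L J : IntermediateField K Kbar) [FiniteDimensional K ↥M]
    (h : IsSGMvia K Kbar M L J) :
    Module.finrank K ↥M = clusterSize K Kbar J * numClusters K Kbar J * Module.finrank K ↥L ∧
    Module.finrank K ↥M = ascIndex K Kbar J * uIndex K Kbar J * Module.finrank K ↥L ∧
    clusterSize K Kbar M = clusterSize K Kbar J * clusterSize K Kbar L ∧
    numClusters K Kbar M = numClusters K Kbar J * numClusters K Kbar L ∧
    ascIndex K Kbar M = ascIndex K Kbar J * ascIndex K Kbar L ∧
    uIndex K Kbar M = uIndex K Kbar J * uIndex K Kbar L := by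
  obtain ⟨hLM, -, hJfd, hbot, hsup⟩ := h
  have hJM : J ≤ M := hsup ▸ le_sup_right
  haveI : FiniteDimensional K ↥L :=
    FiniteDimensional.of_injective (IntermediateField.inclusion hLM).toLinearMap
      (IntermediateField.inclusion_injective hLM)
  haveI : FiniteDimensional K ↥(galClosure K Kbar L) := galClosure_fd L
  haveI : FiniteDimensional K ↥(galClosure K Kbar J) := galClosure_fd J
  haveI : FiniteDimensional K ↥(galClosure K Kbar M) := galClosure_fd M
  haveI : IsGalois K ↥(galClosure K Kbar L) := ⟨⟩
  haveI : IsGalois K ↥(galClosure K Kbar J) := ⟨⟩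
  haveI : IsGalois K ↥(galClosure K Kbar M) := ⟨⟩
  have hMt : galClosure K Kbar M = galClosure K Kbar L ⊔ galClosure K Kbar J := by
    rw [← hsup, galClosure_sup]
  have hLtMt : galClosure K Kbar L ≤ galClosure K Kbar M := hMt ▸ le_sup_left
  have hJtMt : galClosure K Kbar J ≤ galClosure K Kbar M := hMt ▸ le_sup_right
  have hLMt : L ≤ galClosure K Kbar M := hLM.trans (le_galClosure M)
  have hJMt : J ≤ galClosure K Kbar M := hJM.trans (le_galClosure M)
  set resL := resHom (galClosure K Kbar L) (galClosure K Kbar M) hLtMt with hresL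
  set resJ := resHom (galClosure K Kbar J) (galClosure K Kbar M) hJtMt with hresJ
  set φ := resL.prod resJ with hφ
  -- a general principle for transferring fixed points downward
  have keyL : ∀ (σ : ↥(galClosure K Kbar M) ≃ₐ[K] ↥(galClosure K Kbar M))
      (x : ↥(galClosure K Kbar L)),
      σ (IntermediateField.inclusion hLtMt x) = IntermediateField.inclusion hLtMt x ↔
        resL σ x = x := by
    intro σ x
    have h1 := resHom_coe (galClosure K Kbar L) (galClosure K Kbar M) hLtMt σ x
    rw [← hresL] at h1
    constructor
    · intro hfix
      apply Subtype.coe_injective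
      show ((resL σ) x : Kbar) = (x : Kbar)
      rw [h1, hfix, IntermediateField.coe_inclusion]
    · intro hfix
      apply Subtype.coe_injective
      show ((σ ((IntermediateField.inclusion hLtMt) x)) : Kbar)
        = (((IntermediateField.inclusion hLtMt) x) : Kbar)
      rw [← h1, hfix, IntermediateField.coe_inclusion]
  have keyJ : ∀ (σ : ↥(galClosure K Kbar M) ≃ₐ[K] ↥(galClosure K Kbar M))
      (x : ↥(galClosure K Kbar J)),
      σ (IntermediateField.inclusion hJtMt x) = IntermediateField.inclusion hJtMt x ↔
        resJ σ x = x := by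
    intro σ x
    have h1 := resHom_coe (galClosure K Kbar J) (galClosure K Kbar M) hJtMt σ x
    rw [← hresJ] at h1
    constructor
    · intro hfix
      apply Subtype.coe_injective
      show ((resJ σ) x : Kbar) = (x : Kbar)
      rw [h1, hfix, IntermediateField.coe_inclusion]
    · intro hfix
      apply Subtype.coe_injective
      show ((σ ((IntermediateField.inclusion hJtMt) x)) : Kbar)
        = (((IntermediateField.inclusion hJtMt) x) : Kbar)
      rw [← h1, hfix, IntermediateField.coe_inclusion]
  -- σ fixes pointwise the copy of `Lt` inside `Mt` iff `resL σ = 1`, etc.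
  have fixL : ∀ (σ : ↥(galClosure K Kbar M) ≃ₐ[K] ↥(galClosure K Kbar M)),
      σ ∈ (IntermediateField.comap (galClosure K Kbar M).val
        (galClosure K Kbar L)).fixingSubgroup ↔ resL σ = 1 := by
    intro σ
    rw [IntermediateField.mem_fixingSubgroup_iff]
    constructor
    · intro hfix
      refine AlgEquiv.ext fun x => ?_
      rw [AlgEquiv.one_apply, ← keyL σ x]
      exact hfix _ (mem_comap_of hLtMt x x.2)
    · intro h1 y hy
      set x : ↥(galClosure K Kbar L) := ⟨↑y, hy⟩ with hx
      have hyx : IntermediateField.inclusion hLtMt x = y :=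
        Subtype.coe_injective (IntermediateField.coe_inclusion hLtMt x)
      rw [← hyx, keyL σ x, h1, AlgEquiv.one_apply]
  have fixJ : ∀ (σ : ↥(galClosure K Kbar M) ≃ₐ[K] ↥(galClosure K Kbar M)),
      σ ∈ (IntermediateField.comap (galClosure K Kbar M).val
        (galClosure K Kbar J)).fixingSubgroup ↔ resJ σ = 1 := by
    intro σ
    rw [IntermediateField.mem_fixingSubgroup_iff]
    constructor
    · intro hfix
      refine AlgEquiv.ext fun x => ?_
      rw [AlgEquiv.one_apply, ← keyJ σ x]
      exact hfix _ (mem_comap_of hJtMt x x.2)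
    · intro h1 y hy
      set x : ↥(galClosure K Kbar J) := ⟨↑y, hy⟩ with hx
      have hyx : IntermediateField.inclusion hJtMt x = y :=
        Subtype.coe_injective (IntermediateField.coe_inclusion hJtMt x)
      rw [← hyx, keyJ σ x, h1, AlgEquiv.one_apply]
  -- injectivity of φ
  have hinj : Function.Injective φ := by
    rw [injective_iff_map_eq_one]
    intro σ hσ
    have h1 : resL σ = 1 := congrArg Prod.fst hσ
    have h2 : resJ σ = 1 := congrArg Prod.snd hσ
    have hmem : σ ∈ (IntermediateField.comap (galClosure K Kbar M).val
        (galClosure K Kbar L) ⊔ IntermediateField.comap (galClosure K Kbar M).val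
        (galClosure K Kbar J)).fixingSubgroup :=
      fixingSubgroup_inf_le _ _ ⟨(fixL σ).mpr h1, (fixJ σ).mpr h2⟩
    rw [comap_val_sup hLtMt hJtMt, ← hMt, comap_val_self, fixingSubgroup_top_eq] at hmem
    exact hmem
  -- surjectivity of φ
  have hsurjL := resHom_surjective (galClosure K Kbar L) (galClosure K Kbar M) hLtMt
  have hsurjJ := resHom_surjective (galClosure K Kbar J) (galClosure K Kbar M) hJtMt
  have hT : (Subgroup.map resJ ((IntermediateField.comap (galClosure K Kbar M).val
      (galClosure K Kbar L)).fixingSubgroup)) = ⊤ := by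
    set S := (IntermediateField.comap (galClosure K Kbar M).val
      (galClosure K Kbar L)).fixingSubgroup with hS
    have hTfix : IntermediateField.fixedField (Subgroup.map resJ S) = ⊥ := by
      rw [eq_bot_iff]
      intro x hx
      have hyfix : ∀ σ ∈ S, σ (IntermediateField.inclusion hJtMt x)
          = IntermediateField.inclusion hJtMt x := by
        intro σ hσ
        rw [keyJ σ x]
        exact hx ⟨resJ σ, Subgroup.mem_map_of_mem _ hσ⟩
      have hyL : (IntermediateField.inclusion hJtMt x : ↥(galClosure K Kbar M)) ∈
          IntermediateField.comap (galClosure K Kbar M).val (galClosure K Kbar L) := by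
        have : (IntermediateField.inclusion hJtMt x : ↥(galClosure K Kbar M)) ∈
            IntermediateField.fixedField S := fun g => hyfix g g.2
        rw [IsGalois.fixedField_fixingSubgroup] at this
        exact this
      have hxbot : (x : Kbar) ∈ (⊥ : IntermediateField K Kbar) := by
        rw [← hbot, mem_inf_iff]
        exact ⟨mem_of_mem_comap hJtMt x hyL, x.2⟩
      rw [IntermediateField.mem_bot] at hxbot
      obtain ⟨k, hk⟩ := hxbot
      rw [IntermediateField.mem_bot]
      refine ⟨k, ?_⟩
      apply Subtype.coe_injective
      show ((algebraMap K ↥(galClosure K Kbar J)) k : Kbar) = (x : Kbar)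
      rw [IntermediateField.coe_algebraMap_apply, hk]
    have := IntermediateField.fixingSubgroup_fixedField (Subgroup.map resJ S)
    rw [hTfix, fixingSubgroup_bot_eq] at this
    exact this.symm
  have hsurj : Function.Surjective φ := by
    rintro ⟨τL, τJ⟩
    obtain ⟨σ₁, hσ₁⟩ := hsurjL τL
    have hmem2 : (resJ σ₁)⁻¹ * τJ ∈ Subgroup.map resJ ((IntermediateField.comap
        (galClosure K Kbar M).val (galClosure K Kbar L)).fixingSubgroup) := by
      rw [hT]; trivial
    obtain ⟨σ₂, hσ₂S, hσ₂⟩ := hmem2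
    have hresLσ₂ : resL σ₂ = 1 := by
      refine AlgEquiv.ext fun x => ?_
      rw [AlgEquiv.one_apply, ← keyL σ₂ x]
      exact (IntermediateField.mem_fixingSubgroup_iff _ σ₂).mp hσ₂S _
        (mem_comap_of hLtMt x x.2)
    refine ⟨σ₁ * σ₂, ?_⟩
    have h0 : φ (σ₁ * σ₂) = (resL (σ₁ * σ₂), resJ (σ₁ * σ₂)) := rfl
    rw [h0, MonoidHom.map_mul resL σ₁ σ₂, MonoidHom.map_mul resJ σ₁ σ₂, hresLσ₂, hσ₁, hσ₂]
    simp
  set e := MulEquiv.ofBijective φ ⟨hinj, hsurj⟩ with he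
  -- membership characterization of fixSub M
  have hmem : ∀ σ, σ ∈ fixSub K Kbar M ↔
      (resL σ ∈ fixSub K Kbar L ∧ resJ σ ∈ fixSub K Kbar J) := by
    intro σ
    simp only [fixSub]
    constructor
    · intro hσ
      have hσ' := (IntermediateField.mem_fixingSubgroup_iff _ σ).mp hσ
      constructor
      · rw [IntermediateField.mem_fixingSubgroup_iff]
        intro x hxL
        rw [← keyL σ x]
        exact hσ' _ (mem_comap_of hLtMt x (hLM hxL))
      · rw [IntermediateField.mem_fixingSubgroup_iff]
        intro x hxJ
        rw [← keyJ σ x]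
        exact hσ' _ (mem_comap_of hJtMt x (hJM hxJ))
    · rintro ⟨h1, h2⟩
      have goal : σ ∈ (IntermediateField.comap (galClosure K Kbar M).val L ⊔
          IntermediateField.comap (galClosure K Kbar M).val J).fixingSubgroup := by
        refine fixingSubgroup_inf_le _ _ (Subgroup.mem_inf.mpr ⟨?_, ?_⟩)
        · rw [IntermediateField.mem_fixingSubgroup_iff]
          intro y hy
          have hy' : (y : Kbar) ∈ L := hy
          set x : ↥(galClosure K Kbar L) := ⟨↑y, le_galClosure L hy'⟩ with hxdef
          have hyx : IntermediateField.inclusion hLtMt x = y :=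
            Subtype.coe_injective (IntermediateField.coe_inclusion hLtMt x)
          rw [← hyx, keyL σ x]
          exact (IntermediateField.mem_fixingSubgroup_iff _ (resL σ)).mp h1 x hy'
        · rw [IntermediateField.mem_fixingSubgroup_iff]
          intro y hy
          have hy' : (y : Kbar) ∈ J := hy
          set x : ↥(galClosure K Kbar J) := ⟨↑y, le_galClosure J hy'⟩ with hxdef
          have hyx : IntermediateField.inclusion hJtMt x = y :=
            Subtype.coe_injective (IntermediateField.coe_inclusion hJtMt x)
          rw [← hyx, keyJ σ x]
          exact (IntermediateField.mem_fixingSubgroup_iff _ (resJ σ)).mp h2 x hy'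
      rw [comap_val_sup hLMt hJMt, hsup] at goal
      exact goal
  -- the image of fixSub M under e
  have hmap : (fixSub K Kbar M).map (e : (↥(galClosure K Kbar M) ≃ₐ[K]
      ↥(galClosure K Kbar M)) →* _) = (fixSub K Kbar L).prod (fixSub K Kbar J) := by
    ext p
    constructor
    · rintro ⟨σ, hσ, rfl⟩
      exact (hmem σ).mp hσ
    · intro hp
      obtain ⟨σ, hσ⟩ := hsurj p
      refine ⟨σ, (hmem σ).mpr ?_, hσ⟩
      have h1 : resL σ = p.1 := by rw [← hσ]; rfl
      have h2 : resJ σ = p.2 := by rw [← hσ]; rfl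
      rw [h1, h2]
      exact hp
  obtain ⟨c1, c2, c3, c4, c5⟩ := magn_core e (fixSub K Kbar M) (fixSub K Kbar L)
    (fixSub K Kbar J) hmap
  -- index of fixSub equals finrank
  have hidx : ∀ (X : IntermediateField K Kbar) [FiniteDimensional K ↥X],
      (fixSub K Kbar X).index = Module.finrank K ↥X := by
    intro X _
    haveI : FiniteDimensional K ↥(galClosure K Kbar X) := galClosure_fd X
    haveI : IsGalois K ↥(galClosure K Kbar X) := ⟨⟩
    have h1 := fixingSubgroup_index_eq
      (IntermediateField.comap (galClosure K Kbar X).val X)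
    rw [finrank_comap_val X (galClosure K Kbar X) (le_galClosure X)] at h1
    exact h1
  have hfrM := hidx M
  have hfrL := hidx L
  have hfrJ := hidx J
  have hJrs : clusterSize K Kbar J * numClusters K Kbar J = (fixSub K Kbar J).index :=
    Subgroup.relIndex_mul_index Subgroup.le_normalizer
  have hJtu : uIndex K Kbar J * ascIndex K Kbar J = (fixSub K Kbar J).index :=
    Subgroup.relIndex_mul_index Subgroup.le_normalClosure
  have hfrMLJ : Module.finrank K ↥M = Module.finrank K ↥L * (fixSub K Kbar J).index := by
    rw [← hfrM, c1, hfrL]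
  refine ⟨?_, ?_, ?_, ?_, ?_, ?_⟩
  · rw [hJrs, hfrMLJ, mul_comm]
  · rw [mul_comm (ascIndex K Kbar J), hJtu, hfrMLJ, mul_comm]
  · rw [clusterSize, clusterSize, clusterSize, c2, mul_comm]
  · rw [numClusters, numClusters, numClusters, c3, mul_comm]
  · rw [ascIndex, ascIndex, ascIndex, c4, mul_comm]
  · rw [uIndex, uIndex, uIndex, c5, mul_comm]
end

section
/- Suppose M/K is obtained by strong general magnification from L/K through J/K. Let L = N_0 ⊋ N_1 ⊋ ⋯ ⊋ N_k and J = N'_0 ⊋ N'_1 ⊋ ⋯ ⊋ N'_{k'} be the unique descending chains of L/K and J/K, and let K = F_0 ⊊ F_1 ⊊ ⋯ ⊊ F_l and K = F'_0 ⊊ F'_1 ⊊ ⋯ ⊊ F'_{l'} be the unique ascending chains of L/K and J/K; extend the shorter chains constantly (N'_i = N'_{k'} for i > k', etc.). Then the unique descending chain of M/K is M = N_0N'_0 ⊋ N_1N'_1 ⊋ ⋯ ⊋ N_{max(k,k')}N'_{max(k,k')}, with i-th field N_iN'_i, and the unique ascending chain of M/K is K = F_0F'_0 ⊊ F_1F'_1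 ⊊ ⋯ ⊊ F_{max(l,l')}F'_{max(l,l')}, with j-th field F_jF'_j. -/
open IntermediateField Module

open Polynomial

set_option linter.unusedSectionVars false

namespace SGMAux

variable {K Kbar : Type*} [Field K] [PerfectField K] [Field Kbar] [Algebra K Kbar]
  [IsAlgClosure K Kbar]

/-- `σ` fixes `C` pointwise. -/
def Fixes (σ : Kbar ≃ₐ[K] Kbar) (C : IntermediateField K Kbar) : Prop :=
  ∀ x ∈ C, σ x = x

section Basic

lemma isAlgClosed' (K Kbar : Type*) [Field K] [Field Kbar] [Algebra K Kbar]
    [IsAlgClosure K Kbar] : IsAlgClosed Kbar := IsAlgClosure.isAlgClosed (R := K)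

lemma isAlgebraic' : Algebra.IsAlgebraic K Kbar := IsAlgClosure.isAlgebraic

lemma isSep' : Algebra.IsSeparable K Kbar := by
  haveI := isAlgebraic' (K := K) (Kbar := Kbar)
  infer_instance

lemma towerAlg (C : IntermediateField K Kbar) : Algebra.IsAlgebraic (↥C) Kbar := by
  haveI := isAlgebraic' (K := K) (Kbar := Kbar)
  exact Algebra.IsAlgebraic.tower_top (K := K) (↥C)

lemma towerNormal (C : IntermediateField K Kbar) : Normal (↥C) Kbar := by
  haveI := isAlgClosed' K Kbar
  haveI := towerAlg C
  haveI : IsAlgClosure (↥C) Kbar := ⟨‹_›, ‹_›⟩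
  infer_instance

lemma towerSep (C : IntermediateField K Kbar) : Algebra.IsSeparable (↥C) Kbar := by
  haveI := isSep' (K := K) (Kbar := Kbar)
  exact Algebra.isSeparable_tower_top_of_isSeparable K (↥C) Kbar

lemma Fixes.mono {σ : Kbar ≃ₐ[K] Kbar} {C D : IntermediateField K Kbar} (h : C ≤ D)
    (hσ : Fixes σ D) : Fixes σ C := fun x hx => hσ x (h hx)

lemma Fixes.symm {σ : Kbar ≃ₐ[K] Kbar} {C : IntermediateField K Kbar} (hσ : Fixes σ C) :
    Fixes σ.symm C := fun x hx => by
  conv_lhs => rw [← hσ x hx]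
  exact σ.symm_apply_apply x

lemma Fixes.bot {σ : Kbar ≃ₐ[K] Kbar} : Fixes σ (⊥ : IntermediateField K Kbar) := by
  rintro x hx
  rw [IntermediateField.mem_bot] at hx
  obtain ⟨y, rfl⟩ := hx
  exact σ.commutes y

lemma fixes_iff_mem_fixingSubgroup {σ : Kbar ≃ₐ[K] Kbar} {C : IntermediateField K Kbar} :
    Fixes σ C ↔ σ ∈ C.fixingSubgroup := by
  rw [IntermediateField.mem_fixingSubgroup_iff]
  exact ⟨fun h x hx => h x hx, fun h x hx => h x hx⟩

lemma Fixes.sup {σ : Kbar ≃ₐ[K] Kbar} {C D : IntermediateField K Kbar} (hC : Fixes σ C)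
    (hD : Fixes σ D) : Fixes σ (C ⊔ D) := by
  rw [fixes_iff_mem_fixingSubgroup] at hC hD ⊢
  have hC' : C ≤ fixedField (Subgroup.zpowers σ) :=
    (IntermediateField.le_iff_le _ _).2 (Subgroup.zpowers_le.2 hC)
  have hD' : D ≤ fixedField (Subgroup.zpowers σ) :=
    (IntermediateField.le_iff_le _ _).2 (Subgroup.zpowers_le.2 hD)
  exact Subgroup.zpowers_le.1 ((IntermediateField.le_iff_le _ _).1 (sup_le hC' hD'))

lemma fixes_of_le {σ : Kbar ≃ₐ[K] Kbar} {C : IntermediateField K Kbar}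
    (h : Fixes σ C) {x : Kbar} (hx : x ∈ C) : σ x = x := h x hx

/-- The image of an intermediate field under an automorphism fixing it pointwise. -/
lemma map_eq_of_fixes {σ : Kbar ≃ₐ[K] Kbar} {C : IntermediateField K Kbar} (h : Fixes σ C) :
    C.map σ.toAlgHom = C := by
  apply le_antisymm
  · rintro _ ⟨x, hx, rfl⟩
    simpa [h x hx] using hx
  · intro x hx
    exact ⟨x, hx, h x hx⟩

end Basic

section Conj

/-- Conjugation: an automorphism over `C` carrying `x` to any root of its minimal
polynomial. -/
lemma exists_conj (C : IntermediateField K Kbar) {x y : Kbar}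
    (hy : Polynomial.aeval y (minpoly (↥C) x) = 0) :
    ∃ σ : Kbar ≃ₐ[K] Kbar, Fixes σ C ∧ σ x = y := by
  haveI := towerNormal C
  haveI := towerAlg C
  have hxalg : IsAlgebraic (↥C) x := Algebra.IsAlgebraic.isAlgebraic x
  obtain ⟨σ, hσ⟩ := minpoly.exists_algEquiv_of_root' (K := ↥C) (L := Kbar) hxalg hy
  refine ⟨σ.restrictScalars K, ?_, hσ⟩
  intro c hc
  exact σ.commutes ⟨c, hc⟩

/-- The fixed field of the full automorphism group over `Z` is `Z`. -/
lemma mem_of_fixed (Z : IntermediateField K Kbar) (x : Kbar)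
    (h : ∀ σ : Kbar ≃ₐ[K] Kbar, Fixes σ Z → σ x = x) : x ∈ Z := by
  classical
  by_contra hx
  haveI := towerAlg Z
  haveI := towerSep Z
  haveI := isAlgClosed' K Kbar
  have hint : IsIntegral (↥Z) x := (Algebra.IsAlgebraic.isAlgebraic (R := ↥Z) x).isIntegral
  set p := minpoly (↥Z) x with hp
  have hdeg : 2 ≤ p.natDegree := by
    refine (minpoly.two_le_natDegree_iff hint).2 ?_
    rintro ⟨z, rfl⟩
    exact hx z.2
  have hsep : p.Separable := Algebra.IsSeparable.isSeparable (↥Z) x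
  have hsplit : (p.map (algebraMap (↥Z) Kbar)).Splits := IsAlgClosed.splits _
  set q := p.map (algebraMap (↥Z) Kbar) with hq
  have hq0 : q ≠ 0 := Polynomial.map_ne_zero (minpoly.ne_zero hint)
  have hcard : q.natDegree = Multiset.card q.roots := Splits.natDegree_eq_card_roots hsplit
  have hndeg : q.natDegree = p.natDegree := natDegree_map _
  have hxroot : x ∈ q.roots := by
    rw [Polynomial.mem_roots hq0]
    rw [Polynomial.IsRoot, Polynomial.eval_map, ← Polynomial.aeval_def]
    exact minpoly.aeval _ _
  have hnodup : q.roots.Nodup := nodup_roots (Separable.map hsep)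
  have hge2 : 2 ≤ Multiset.card q.roots := by omega
  have h1 : 0 < Multiset.card (q.roots.erase x) := by
    rw [Multiset.card_erase_of_mem hxroot]
    exact Nat.lt_pred_iff.2 hge2
  obtain ⟨y, hy⟩ := Multiset.card_pos_iff_exists_mem.1 h1
  have hyx : y ≠ x ∧ y ∈ q.roots := (Multiset.Nodup.mem_erase_iff hnodup).1 hy
  have hyroot : Polynomial.aeval y p = 0 := by
    have := (Polynomial.mem_roots hq0).1 hyx.2
    rwa [Polynomial.IsRoot, Polynomial.eval_map, ← Polynomial.aeval_def] at this
  obtain ⟨σ, hσfix, hσx⟩ := exists_conj Z (x := x) hyroot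
  exact hyx.1 (by rw [← hσx, h σ hσfix])

end Conj

section Pair

/-- Stability under all automorphisms over `C` gives a Galois pair. -/
lemma isGaloisPair_of_stable {C X : IntermediateField K Kbar} (hCX : C ≤ X)
    (hst : ∀ σ : Kbar ≃ₐ[K] Kbar, Fixes σ C → ∀ x ∈ X, σ x ∈ X) :
    IsGaloisPair K Kbar C X := by
  haveI := towerSep C
  haveI := towerAlg C
  haveI := isAlgClosed' K Kbar
  refine ⟨hCX, ?_⟩
  set X' := extendScalars hCX with hX'
  haveI sep' : Algebra.IsSeparable (↥C) (↥X') :=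
    Algebra.isSeparable_tower_bot_of_isSeparable (↥C) (↥X') Kbar
  have hnormal : Normal (↥C) (↥X') := by
    rw [normal_iff]
    intro ξ
    have hint : IsIntegral (↥C) ((ξ : Kbar)) :=
      (Algebra.IsAlgebraic.isAlgebraic (R := ↥C) ((ξ : Kbar))).isIntegral
    have hint' : IsIntegral (↥C) ξ := by
      rwa [← isIntegral_algebraMap_iff (algebraMap (↥X') Kbar).injective]
    refine ⟨hint', ?_⟩
    have hmp : minpoly (↥C) ((ξ : Kbar)) = minpoly (↥C) ξ :=
      minpoly.algebraMap_eq (algebraMap (↥X') Kbar).injective ξ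
    rw [← hmp]
    refine IntermediateField.splits_of_splits (IsAlgClosed.splits _) ?_
    intro r hr
    have hroot : Polynomial.aeval r (minpoly (↥C) ((ξ : Kbar))) = 0 :=
      Polynomial.aeval_eq_zero_of_mem_rootSet hr
    obtain ⟨σ, hσfix, hσξ⟩ := exists_conj C hroot
    have : r ∈ X := by
      rw [← hσξ]
      exact hst σ hσfix _ ξ.2
    exact this
  exact { to_isSeparable := sep', to_normal := hnormal }

/-- A Galois pair is stable under all automorphisms over the base. -/
lemma mem_of_isGaloisPair {C X : IntermediateField K Kbar} (h : IsGaloisPair K Kbar C X)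
    {σ : Kbar ≃ₐ[K] Kbar} (hfix : Fixes σ C) : ∀ x ∈ X, σ x ∈ X := by
  obtain ⟨hle, hgal⟩ := h
  haveI := hgal.to_normal
  intro x hx
  let σ' : Kbar ≃ₐ[↥C] Kbar :=
    AlgEquiv.ofRingEquiv (f := σ.toRingEquiv) (fun c => hfix c c.2)
  let ξ : ↥(extendScalars hle) := ⟨x, hx⟩
  have hcomm := AlgHom.restrictNormal_commutes σ'.toAlgHom (↥(extendScalars hle)) ξ
  have : σ x = ((σ'.toAlgHom.restrictNormal (↥(extendScalars hle))) ξ : Kbar) := hcomm.symm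
  rw [this]
  exact ((σ'.toAlgHom.restrictNormal (↥(extendScalars hle))) ξ).2

lemma map_eq_of_isGaloisPair {C X : IntermediateField K Kbar} (h : IsGaloisPair K Kbar C X)
    {σ : Kbar ≃ₐ[K] Kbar} (hfix : Fixes σ C) : X.map σ.toAlgHom = X := by
  apply le_antisymm
  · rintro _ ⟨x, hx, rfl⟩
    exact mem_of_isGaloisPair h hfix x hx
  · intro x hx
    exact ⟨σ.symm x, mem_of_isGaloisPair h (Fixes.symm hfix) x hx, σ.apply_symm_apply x⟩

end Pair

section GalClosure

lemma galClosure_eq (L : IntermediateField K Kbar) :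
    galClosure K Kbar L = normalClosure K (↥L) Kbar := rfl

lemma le_galClosure (L : IntermediateField K Kbar) : L ≤ galClosure K Kbar L := by
  rw [galClosure_eq]
  exact IntermediateField.le_normalClosure L

lemma galClosure_finiteDimensional (L : IntermediateField K Kbar) [FiniteDimensional K (↥L)] :
    FiniteDimensional K (↥(galClosure K Kbar L)) := by
  rw [galClosure_eq]
  exact normalClosure.is_finiteDimensional K (↥L) Kbar

lemma galClosure_normal (L : IntermediateField K Kbar) : Normal K (↥(galClosure K Kbar L)) := by
  rw [galClosure_eq]
  exact normalClosure.normal K (↥L) Kbar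

lemma normal_mem_of_mem {T : IntermediateField K Kbar} (hT : Normal K (↥T))
    (σ : Kbar ≃ₐ[K] Kbar) : ∀ x ∈ T, σ x ∈ T := by
  intro x hx
  haveI := hT
  have hcomm := AlgHom.restrictNormal_commutes σ.toAlgHom (↥T) (⟨x, hx⟩ : ↥T)
  have : σ x = ((σ.toAlgHom.restrictNormal (↥T)) ⟨x, hx⟩ : Kbar) := hcomm.symm
  rw [this]
  exact ((σ.toAlgHom.restrictNormal (↥T)) ⟨x, hx⟩).2

lemma normal_map_eq {T : IntermediateField K Kbar} (hT : Normal K (↥T))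
    (σ : Kbar ≃ₐ[K] Kbar) : T.map σ.toAlgHom = T := by
  apply le_antisymm
  · rintro _ ⟨x, hx, rfl⟩
    exact normal_mem_of_mem hT σ x hx
  · intro x hx
    exact ⟨σ.symm x, normal_mem_of_mem hT σ.symm x hx, σ.apply_symm_apply x⟩

end GalClosure

section Artin

/-- **Artin-type extension lemma**: any automorphism of `Kbar/K` fixing `T ⊓ Z` agrees on a
finite Galois `T` with some automorphism fixing `Z` pointwise. -/
lemma exists_extend (T Z : IntermediateField K Kbar) (hTn : Normal K (↥T))
    [FiniteDimensional K (↥T)] (σ : Kbar ≃ₐ[K] Kbar) (hσ : Fixes σ (T ⊓ Z)) :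
    ∃ u : Kbar ≃ₐ[K] Kbar, Fixes u Z ∧ ∀ t ∈ T, u t = σ t := by
  haveI := hTn
  let r : (Kbar ≃ₐ[K] Kbar) →* ((↥T) ≃ₐ[K] (↥T)) := AlgEquiv.restrictNormalHom (↥T)
  let S : Subgroup (Kbar ≃ₐ[K] Kbar) := Z.fixingSubgroup
  let H : Subgroup ((↥T) ≃ₐ[K] (↥T)) := S.map r
  let D : IntermediateField K (↥T) := IntermediateField.comap T.val Z
  have hrapp : ∀ (u : Kbar ≃ₐ[K] Kbar) (ξ : ↥T), ((r u ξ : ↥T) : Kbar) = u (ξ : Kbar) :=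
    fun u ξ => AlgEquiv.restrictNormalHom_apply T u ξ
  have hff : IntermediateField.fixedField H ≤ D := by
    intro ξ hξ
    have key : ∀ u : Kbar ≃ₐ[K] Kbar, Fixes u Z → u ((ξ : Kbar)) = (ξ : Kbar) := by
      intro u hu
      have hmem : r u ∈ H := ⟨u, fixes_iff_mem_fixingSubgroup.1 hu, rfl⟩
      have hfixξ : r u ξ = ξ := hξ ⟨r u, hmem⟩
      rw [← hrapp u ξ, hfixξ]
    have : (ξ : Kbar) ∈ Z := mem_of_fixed Z _ key
    exact this
  have hDH : D.fixingSubgroup ≤ H := by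
    have h1 : D.fixingSubgroup ≤ (IntermediateField.fixedField H).fixingSubgroup :=
      IntermediateField.fixingSubgroup_le hff
    rwa [IntermediateField.fixingSubgroup_fixedField H] at h1
  have hrσ : r σ ∈ D.fixingSubgroup := by
    rw [IntermediateField.mem_fixingSubgroup_iff]
    intro ξ hξ
    have h1 : (ξ : Kbar) ∈ T ⊓ Z := ⟨ξ.2, hξ⟩
    apply Subtype.ext
    rw [hrapp σ ξ]
    exact hσ _ h1
  obtain ⟨u, huS, hur⟩ := hDH hrσ
  refine ⟨u, fixes_iff_mem_fixingSubgroup.2 huS, ?_⟩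
  intro t ht
  have := congrArg (fun (g : (↥T) ≃ₐ[K] (↥T)) => ((g ⟨t, ht⟩ : ↥T) : Kbar)) hur
  simpa [hrapp] using this

end Artin

section Degree

lemma findim_of_le {X Y : IntermediateField K Kbar} (h : X ≤ Y) [FiniteDimensional K (↥Y)] :
    FiniteDimensional K (↥X) :=
  FiniteDimensional.of_injective (IntermediateField.inclusion h).toLinearMap
    (IntermediateField.inclusion h).toRingHom.injective

lemma finrank_mono {X Y : IntermediateField K Kbar} (h : X ≤ Y) [FiniteDimensional K (↥Y)] :
    finrank K (↥X) ≤ finrank K (↥Y) :=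
  LinearMap.finrank_le_finrank_of_injective
    (f := (IntermediateField.inclusion h).toLinearMap)
    (IntermediateField.inclusion h).toRingHom.injective

lemma finrank_strict_mono {X Y : IntermediateField K Kbar} (h : X ≤ Y) (hne : X ≠ Y)
    [FiniteDimensional K (↥Y)] : finrank K (↥X) < finrank K (↥Y) := by
  refine lt_of_le_of_ne (finrank_mono h) (fun heq => hne ?_)
  exact IntermediateField.eq_of_le_of_finrank_le h (le_of_eq heq.symm)

/-- Degree of a compositum with a linearly disjoint Galois extension. -/
lemma finrank_sup_of_inf_bot (T U : IntermediateField K Kbar) (hTn : Normal K (↥T))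
    [FiniteDimensional K (↥T)] [FiniteDimensional K (↥U)] (h : T ⊓ U = ⊥) :
    finrank K (↥(T ⊔ U)) = finrank K (↥T) * finrank K (↥U) := by
  classical
  haveI := hTn
  haveI := isSep' (K := K) (Kbar := Kbar)
  haveI := isAlgClosed' K Kbar
  haveI sepT : Algebra.IsSeparable K (↥T) :=
    Algebra.isSeparable_tower_bot_of_isSeparable K (↥T) Kbar
  haveI : IsGalois K (↥T) := { }
  obtain ⟨a, ha⟩ := Field.exists_primitive_element K (↥T)
  set α : Kbar := T.val a with hα
  have hTα : K⟮α⟯ = T := by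
    have h1 := congrArg (fun (W : IntermediateField K (↥T)) => W.map T.val) ha
    rw [IntermediateField.adjoin_map, Set.image_singleton] at h1
    have h2 : (⊤ : IntermediateField K (↥T)).map T.val = T := by
      apply le_antisymm
      · rintro _ ⟨y, _, rfl⟩
        exact y.2
      · intro y hy
        exact ⟨⟨y, hy⟩, trivial, rfl⟩
    rw [h2] at h1
    exact h1
  have hαint : IsIntegral K α := (IsIntegral.of_finite K a).algebraMap
  have hαintU : IsIntegral (↥U) α := IsIntegral.tower_top hαint
  set p := minpoly (↥U) α with hp
  -- upper bound on the degree of p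
  have hKα : finrank K (↥K⟮α⟯) = (minpoly K α).natDegree := IntermediateField.adjoin.finrank hαint
  have hple : p.natDegree ≤ finrank K (↥T) := by
    have hdvd := minpoly.dvd_map_of_isScalarTower K (↥U) α
    have h1 : p.natDegree ≤ ((minpoly K α).map (algebraMap K (↥U))).natDegree :=
      Polynomial.natDegree_le_of_dvd hdvd
        (Polynomial.map_ne_zero (minpoly.ne_zero hαint))
    rw [Polynomial.natDegree_map] at h1
    rw [← hTα, hKα]
    exact h1
  -- lower bound via conjugates
  have hlb : finrank K (↥T) ≤ p.natDegree := by
    rw [← IsGalois.card_aut_eq_finrank K (↥T)]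
    set f : ((↥T) ≃ₐ[K] (↥T)) → Kbar := fun τ => T.val (τ a) with hf
    have hroot : ∀ τ, f τ ∈ (p.aroots Kbar).toFinset := by
      intro τ
      rw [Multiset.mem_toFinset, Polynomial.mem_aroots]
      refine ⟨minpoly.ne_zero hαintU, ?_⟩
      set σ : Kbar ≃ₐ[K] Kbar := τ.liftNormal Kbar with hσ
      have hσfix : Fixes σ (T ⊓ U) := by
        rw [h]; exact Fixes.bot
      obtain ⟨u, huU, huT⟩ := exists_extend T U hTn σ hσfix
      have huα : u α = f τ := by
        have h1 : σ α = f τ := AlgEquiv.liftNormal_commutes τ Kbar a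
        rw [← h1]
        exact huT α a.2
      let u' : Kbar ≃ₐ[↥U] Kbar :=
        AlgEquiv.ofRingEquiv (f := u.toRingEquiv) (fun c => huU c c.2)
      have h2 : Polynomial.aeval (u' α) p = u' (Polynomial.aeval α p) :=
        (Polynomial.aeval_algHom_apply u'.toAlgHom α p)
      have h3 : (u' α) = u α := rfl
      rw [← huα, ← h3, h2, minpoly.aeval, map_zero]
    have hinj : Function.Injective f := by
      intro τ τ' heq
      have h1 : τ a = τ' a := Subtype.val_injective heq
      have h2 : Algebra.adjoin K ({a} : Set (↥T)) = ⊤ := by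
        have := congrArg IntermediateField.toSubalgebra ha
        rwa [IntermediateField.adjoin_simple_toSubalgebra_of_isAlgebraic
          (IsIntegral.of_finite K a).isAlgebraic, IntermediateField.top_toSubalgebra] at this
      have h3 : ∀ x : ↥T, τ x = τ' x := by
        intro x
        have hx : x ∈ Algebra.adjoin K ({a} : Set (↥T)) := h2 ▸ Algebra.mem_top
        have : Algebra.adjoin K ({a} : Set (↥T)) ≤ (AlgHom.equalizer τ.toAlgHom τ'.toAlgHom) :=
          Algebra.adjoin_le (by
            intro z hz
            rw [Set.mem_singleton_iff] at hz
            subst hz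
            exact h1)
        exact this hx
      exact AlgEquiv.ext h3
    calc Nat.card ((↥T) ≃ₐ[K] (↥T)) = Finset.univ.card (α := ((↥T) ≃ₐ[K] (↥T))) :=
          Nat.card_eq_fintype_card
      _ ≤ (p.aroots Kbar).toFinset.card :=
          Finset.card_le_card_of_injOn f (fun τ _ => hroot τ) hinj.injOn
      _ ≤ Multiset.card (p.aroots Kbar) := Multiset.toFinset_card_le _
      _ ≤ p.natDegree := by
          have := Polynomial.card_roots' (p.map (algebraMap (↥U) Kbar))
          rwa [Polynomial.natDegree_map] at this
  have hn : p.natDegree = finrank K (↥T) := le_antisymm hple hlb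
  -- compute the degree of the compositum
  have hTU : T ⊔ U = IntermediateField.restrictScalars K (IntermediateField.adjoin (↥U) {α}) := by
    rw [IntermediateField.restrictScalars_adjoin_eq_sup, hTα]
    exact sup_comm T U
  rw [hTU]
  have htower : finrank K (↥U) * finrank (↥U) (↥(IntermediateField.adjoin (↥U) {α}))
      = finrank K (↥(IntermediateField.restrictScalars K (IntermediateField.adjoin (↥U) {α}))) :=
    Module.finrank_mul_finrank K (↥U) (↥(IntermediateField.adjoin (↥U) {α}))
  have hadj : finrank (↥U) (↥(IntermediateField.adjoin (↥U) {α})) = p.natDegree :=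
    IntermediateField.adjoin.finrank hαintU
  rw [← htower, hadj, hn, mul_comm]

lemma linearDisjoint_of_inf_bot (T U : IntermediateField K Kbar) (hTn : Normal K (↥T))
    [FiniteDimensional K (↥T)] [FiniteDimensional K (↥U)] (h : T ⊓ U = ⊥) :
    T.LinearDisjoint U :=
  IntermediateField.LinearDisjoint.of_finrank_sup (finrank_sup_of_inf_bot T U hTn h)

lemma finrank_sup_sub {T U X Y : IntermediateField K Kbar} (hd : T.LinearDisjoint U)
    [FiniteDimensional K (↥T)] [FiniteDimensional K (↥U)]
    (hX : X ≤ T) (hY : Y ≤ U) :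
    finrank K (↥(X ⊔ Y)) = finrank K (↥X) * finrank K (↥Y) := by
  haveI := findim_of_le hX
  haveI := findim_of_le hY
  exact (hd.of_le hX hY).finrank_sup

lemma inf_sup_eq_left {T U X Y : IntermediateField K Kbar} (hd : T.LinearDisjoint U)
    [FiniteDimensional K (↥T)] [FiniteDimensional K (↥U)]
    (hX : X ≤ T) (hY : Y ≤ U) : T ⊓ (X ⊔ Y) = X := by
  haveI := findim_of_le hX
  haveI := findim_of_le hY
  set D := T ⊓ (X ⊔ Y) with hD
  have hXD : X ≤ D := le_inf hX le_sup_left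
  have hDT : D ≤ T := inf_le_left
  have hsup : D ⊔ Y = X ⊔ Y := by
    apply le_antisymm
    · exact sup_le inf_le_right le_sup_right
    · exact sup_le (le_trans hXD le_sup_left) le_sup_right
  have h1 : finrank K (↥D) * finrank K (↥Y) = finrank K (↥X) * finrank K (↥Y) := by
    rw [← finrank_sup_sub hd hDT hY, ← finrank_sup_sub hd hX hY, hsup]
  have h2 : finrank K (↥D) = finrank K (↥X) :=
    Nat.eq_of_mul_eq_mul_right Module.finrank_pos h1
  haveI := findim_of_le hDT
  exact (IntermediateField.eq_of_le_of_finrank_le hXD (le_of_eq h2)).symm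

end Degree

section Steps

variable {L J : IntermediateField K Kbar}

/-- Descending chain step for a compositum. -/
lemma descStep_sup [FiniteDimensional K (↥L)] [FiniteDimensional K (↥J)]
    (hdisj : galClosure K Kbar L ⊓ galClosure K Kbar J = ⊥)
    {X X1 Y Y1 : IntermediateField K Kbar} (hXL : X ≤ L) (hYJ : Y ≤ J)
    (hdX : DescStep K Kbar X X1) (hdY : DescStep K Kbar Y Y1) :
    DescStep K Kbar (X ⊔ Y) (X1 ⊔ Y1) := by
  set Lt := galClosure K Kbar L with hLt
  set Jt := galClosure K Kbar J with hJt
  haveI hLtfin : FiniteDimensional K (↥Lt) := galClosure_finiteDimensional L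
  haveI hJtfin : FiniteDimensional K (↥Jt) := galClosure_finiteDimensional J
  have hLtn : Normal K (↥Lt) := galClosure_normal L
  have hd : Lt.LinearDisjoint Jt := linearDisjoint_of_inf_bot Lt Jt hLtn hdisj
  have hXLt : X ≤ Lt := le_trans hXL (le_galClosure L)
  have hYJt : Y ≤ Jt := le_trans hYJ (le_galClosure J)
  have hX1Lt : X1 ≤ Lt := le_trans hdX.1 hXLt
  have hY1Jt : Y1 ≤ Jt := le_trans hdY.1 hYJt
  refine ⟨sup_le_sup hdX.1 hdY.1, ?_, ?_⟩
  · refine isGaloisPair_of_stable (sup_le_sup hdX.1 hdY.1) ?_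
    intro σ hfix x hx
    have h1 : X.map σ.toAlgHom = X :=
      map_eq_of_isGaloisPair hdX.2.1 (Fixes.mono le_sup_left hfix)
    have h2 : Y.map σ.toAlgHom = Y :=
      map_eq_of_isGaloisPair hdY.2.1 (Fixes.mono le_sup_right hfix)
    have h3 : (X ⊔ Y).map σ.toAlgHom = X ⊔ Y := by
      rw [IntermediateField.map_sup, h1, h2]
    rw [← h3]
    exact ⟨x, hx, rfl⟩
  · intro N'' hN''le hN''pair
    set A := Lt ⊓ N'' with hA
    set B := Jt ⊓ N'' with hB
    have hXint : Lt ⊓ (X ⊔ Y) = X := inf_sup_eq_left hd hXLt hYJt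
    have hYint : Jt ⊓ (X ⊔ Y) = Y := by
      have := inf_sup_eq_left hd.symm hYJt hXLt
      rwa [sup_comm Y X] at this
    have hAX : A ≤ X := by
      rw [← hXint]
      exact inf_le_inf_left Lt hN''le
    have hBY : B ≤ Y := by
      rw [← hYint]
      exact inf_le_inf_left Jt hN''le
    have hpairA : IsGaloisPair K Kbar A X := by
      refine isGaloisPair_of_stable hAX ?_
      intro σ hσA x hx
      obtain ⟨u, huN, huLt⟩ := exists_extend Lt N'' hLtn σ hσA
      have h1 : σ x = u x := (huLt x (hXLt hx)).symm
      have h2 : u x ∈ X ⊔ Y := by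
        have hm := map_eq_of_isGaloisPair hN''pair huN
        rw [← hm]
        exact ⟨x, le_sup_left (α := IntermediateField K Kbar) (a := X) (b := Y) hx, rfl⟩
      have h3 : σ x ∈ Lt := normal_mem_of_mem hLtn σ x (hXLt hx)
      rw [← hXint]
      exact ⟨h3, h1 ▸ h2⟩
    have hpairB : IsGaloisPair K Kbar B Y := by
      refine isGaloisPair_of_stable hBY ?_
      intro σ hσB y hy
      have hJtn : Normal K (↥Jt) := galClosure_normal J
      obtain ⟨u, huN, huJt⟩ := exists_extend Jt N'' hJtn σ hσB
      have h1 : σ y = u y := (huJt y (hYJt hy)).symm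
      have h2 : u y ∈ X ⊔ Y := by
        have hm := map_eq_of_isGaloisPair hN''pair huN
        rw [← hm]
        exact ⟨y, le_sup_right (α := IntermediateField K Kbar) (a := X) (b := Y) hy, rfl⟩
      have h3 : σ y ∈ Jt := normal_mem_of_mem hJtn σ y (hYJt hy)
      rw [← hYint]
      exact ⟨h3, h1 ▸ h2⟩
    have hX1A : finrank K (↥X1) ≤ finrank K (↥A) := hdX.2.2 A hAX hpairA
    have hY1B : finrank K (↥Y1) ≤ finrank K (↥B) := hdY.2.2 B hBY hpairB
    have hABle : A ⊔ B ≤ N'' := sup_le inf_le_right inf_le_right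
    haveI : FiniteDimensional K (↥(Lt ⊔ Jt)) := IntermediateField.finiteDimensional_sup Lt Jt
    haveI : FiniteDimensional K (↥N'') :=
      findim_of_le (le_trans hN''le (sup_le_sup hXLt hYJt))
    calc finrank K (↥(X1 ⊔ Y1)) = finrank K (↥X1) * finrank K (↥Y1) :=
          finrank_sup_sub hd hX1Lt hY1Jt
      _ ≤ finrank K (↥A) * finrank K (↥B) := Nat.mul_le_mul hX1A hY1B
      _ = finrank K (↥(A ⊔ B)) := (finrank_sup_sub hd inf_le_left inf_le_left).symm
      _ ≤ finrank K (↥N'') := finrank_mono hABle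

/-- Ascending chain step for a compositum. -/
lemma ascStep_sup {M : IntermediateField K Kbar}
    [FiniteDimensional K (↥L)] [FiniteDimensional K (↥J)]
    (hdisj : galClosure K Kbar L ⊓ galClosure K Kbar J = ⊥) (hM : L ⊔ J = M)
    {Fj Fj1 F'j F'j1 : IntermediateField K Kbar}
    (hA : AscStep K Kbar L Fj Fj1) (hB : AscStep K Kbar J F'j F'j1) :
    AscStep K Kbar M (Fj ⊔ F'j) (Fj1 ⊔ F'j1) := by
  set Lt := galClosure K Kbar L with hLt
  set Jt := galClosure K Kbar J with hJt
  haveI hLtfin : FiniteDimensional K (↥Lt) := galClosure_finiteDimensional L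
  haveI hJtfin : FiniteDimensional K (↥Jt) := galClosure_finiteDimensional J
  have hLtn : Normal K (↥Lt) := galClosure_normal L
  have hJtn : Normal K (↥Jt) := galClosure_normal J
  have hd : Lt.LinearDisjoint Jt := linearDisjoint_of_inf_bot Lt Jt hLtn hdisj
  have hLLt : L ≤ Lt := le_galClosure L
  have hJJt : J ≤ Jt := le_galClosure J
  have hFjL : Fj ≤ L := le_trans hA.1 hA.2.1
  have hF'jJ : F'j ≤ J := le_trans hB.1 hB.2.1
  have hMle : M ≤ Lt ⊔ Jt := by
    rw [← hM]
    exact sup_le_sup hLLt hJJt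
  have hML : M ≤ L ⊔ Jt := by
    rw [← hM]
    exact sup_le_sup le_rfl hJJt
  have hMJ : M ≤ Lt ⊔ J := by
    rw [← hM]
    exact sup_le_sup hLLt le_rfl
  refine ⟨sup_le_sup hA.1 hB.1,
    sup_le (le_trans hA.2.1 (by rw [← hM]; exact le_sup_left))
      (le_trans hB.2.1 (by rw [← hM]; exact le_sup_right)), ?_, ?_⟩
  · refine isGaloisPair_of_stable (sup_le_sup hA.1 hB.1) ?_
    intro σ hfix x hx
    have h1 : Fj1.map σ.toAlgHom = Fj1 :=
      map_eq_of_isGaloisPair hA.2.2.1 (Fixes.mono le_sup_left hfix)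
    have h2 : F'j1.map σ.toAlgHom = F'j1 :=
      map_eq_of_isGaloisPair hB.2.2.1 (Fixes.mono le_sup_right hfix)
    have h3 : (Fj1 ⊔ F'j1).map σ.toAlgHom = Fj1 ⊔ F'j1 := by
      rw [IntermediateField.map_sup, h1, h2]
    rw [← h3]
    exact ⟨x, hx, rfl⟩
  · intro F'' hle1 hle2 hpair''
    set A' := Lt ⊓ (F'' ⊔ Jt) with hA'
    set B' := Jt ⊓ (F'' ⊔ Lt) with hB'
    have hF''LtJt : F'' ≤ Lt ⊔ Jt := le_trans hle2 hMle
    have hFjF'' : Fj ≤ F'' := le_trans le_sup_left hle1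
    have hF'jF'' : F'j ≤ F'' := le_trans le_sup_right hle1
    have hA'L : A' ≤ L := by
      have h1 : F'' ⊔ Jt ≤ L ⊔ Jt := sup_le (le_trans hle2 hML) le_sup_right
      have h2 : A' ≤ Lt ⊓ (L ⊔ Jt) := inf_le_inf_left Lt h1
      rwa [inf_sup_eq_left hd hLLt le_rfl] at h2
    have hB'J : B' ≤ J := by
      have h1 : F'' ⊔ Lt ≤ J ⊔ Lt := sup_le (le_trans hle2 (by rw [sup_comm J Lt]; exact hMJ))
        le_sup_right
      have h2 : B' ≤ Jt ⊓ (J ⊔ Lt) := inf_le_inf_left Jt h1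
      rwa [inf_sup_eq_left hd.symm hJJt le_rfl] at h2
    have hFjA' : Fj ≤ A' := le_inf (le_trans hFjL hLLt) (le_trans hFjF'' le_sup_left)
    have hF'jB' : F'j ≤ B' := le_inf (le_trans hF'jJ hJJt) (le_trans hF'jF'' le_sup_left)
    -- stability helper producing `u` fixing `Jt` and agreeing with `σ` on `Lt`
    have hpairA' : IsGaloisPair K Kbar Fj A' := by
      refine isGaloisPair_of_stable hFjA' ?_
      intro σ hσ x hx
      obtain ⟨u, huJt, huLt⟩ := exists_extend Lt Jt hLtn σ (by rw [hdisj]; exact Fixes.bot)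
      have hufixFj : Fixes u Fj := fun c hc => (huLt c (hLLt (hFjL hc))).trans (hσ c hc)
      have hufixF'j : Fixes u F'j := Fixes.mono (le_trans hF'jJ hJJt) huJt
      have hmapF'' : F''.map u.toAlgHom = F'' :=
        map_eq_of_isGaloisPair hpair'' (Fixes.sup hufixFj hufixF'j)
      have h1 : σ x = u x := (huLt x (inf_le_left (a := Lt) hx)).symm
      have h2 : u x ∈ F'' ⊔ Jt := by
        have hm : (F'' ⊔ Jt).map u.toAlgHom = F'' ⊔ Jt := by
          rw [IntermediateField.map_sup, hmapF'', map_eq_of_fixes huJt]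
        rw [← hm]
        exact ⟨x, inf_le_right (a := Lt) hx, rfl⟩
      have h3 : σ x ∈ Lt := normal_mem_of_mem hLtn σ x (inf_le_left (a := Lt) hx)
      exact ⟨h3, h1 ▸ h2⟩
    have hpairB' : IsGaloisPair K Kbar F'j B' := by
      refine isGaloisPair_of_stable hF'jB' ?_
      intro σ hσ x hx
      obtain ⟨u, huLt, huJt⟩ := exists_extend Jt Lt hJtn σ
        (by rw [inf_comm, hdisj]; exact Fixes.bot)
      have hufixF'j : Fixes u F'j := fun c hc => (huJt c (hJJt (hF'jJ hc))).trans (hσ c hc)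
      have hufixFj : Fixes u Fj := Fixes.mono (le_trans hFjL hLLt) huLt
      have hmapF'' : F''.map u.toAlgHom = F'' :=
        map_eq_of_isGaloisPair hpair'' (Fixes.sup hufixFj hufixF'j)
      have h1 : σ x = u x := (huJt x (inf_le_left (a := Jt) hx)).symm
      have h2 : u x ∈ F'' ⊔ Lt := by
        have hm : (F'' ⊔ Lt).map u.toAlgHom = F'' ⊔ Lt := by
          rw [IntermediateField.map_sup, hmapF'', map_eq_of_fixes huLt]
        rw [← hm]
        exact ⟨x, inf_le_right (a := Jt) hx, rfl⟩
      have h3 : σ x ∈ Jt := normal_mem_of_mem hJtn σ x (inf_le_left (a := Jt) hx)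
      exact ⟨h3, h1 ▸ h2⟩
    have hrankA' : finrank K (↥A') ≤ finrank K (↥Fj1) := hA.2.2.2 A' hFjA' hA'L hpairA'
    have hrankB' : finrank K (↥B') ≤ finrank K (↥F'j1) := hB.2.2.2 B' hF'jB' hB'J hpairB'
    -- the key inclusion F'' ≤ A' ⊔ B'
    have hF''le : F'' ≤ A' ⊔ B' := by
      intro x hx
      apply mem_of_fixed
      intro σ hσ
      have hσA' : Fixes σ A' := Fixes.mono le_sup_left hσ
      have hσB' : Fixes σ B' := Fixes.mono le_sup_right hσ
      obtain ⟨u, huFJt, huLt⟩ := exists_extend Lt (F'' ⊔ Jt) hLtn σ hσA'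
      have hufixF'' : Fixes u F'' := Fixes.mono le_sup_left huFJt
      have hufixJt : Fixes u Jt := Fixes.mono le_sup_right huFJt
      set v : Kbar ≃ₐ[K] Kbar := σ.trans u.symm with hv
      have hvLt : Fixes v Lt := by
        intro t ht
        show u.symm (σ t) = t
        rw [← huLt t ht]
        exact u.symm_apply_apply t
      have hvB' : Fixes v (Jt ⊓ (F'' ⊔ Lt)) := by
        intro b hb
        show u.symm (σ b) = b
        rw [hσB' b hb]
        exact (Fixes.symm hufixJt) b (inf_le_left (a := Jt) hb)
      obtain ⟨w, hwFLt, hwJt⟩ := exists_extend Jt (F'' ⊔ Lt) hJtn v hvB'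
      have hwfixF'' : Fixes w F'' := Fixes.mono le_sup_left hwFLt
      have hwfixLt : Fixes w Lt := Fixes.mono le_sup_right hwFLt
      set z : Kbar ≃ₐ[K] Kbar := v.trans w.symm with hz
      have hzLtJt : Fixes z (Lt ⊔ Jt) := by
        refine Fixes.sup ?_ ?_
        · intro t ht
          show w.symm (v t) = t
          rw [hvLt t ht]
          exact (Fixes.symm hwfixLt) t ht
        · intro jx hjx
          show w.symm (v jx) = jx
          rw [← hwJt jx hjx]
          exact w.symm_apply_apply _
      have hvx : v x = x := by
        have h1 : v x = w (z x) := (w.apply_symm_apply (v x)).symm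
        rw [h1, hzLtJt x (hF''LtJt hx), hwfixF'' x hx]
      have h2 : σ x = u x := by
        have h3 : u.symm (σ x) = x := hvx
        have h4 := congrArg u h3
        rwa [u.apply_symm_apply] at h4
      rw [h2]
      exact hufixF'' x hx
    haveI : FiniteDimensional K (↥(Lt ⊔ Jt)) := IntermediateField.finiteDimensional_sup Lt Jt
    haveI : FiniteDimensional K (↥(A' ⊔ B')) :=
      findim_of_le (sup_le (le_trans inf_le_left le_sup_left)
        (le_trans inf_le_left le_sup_right))
    have hFj1Lt : Fj1 ≤ Lt := le_trans hA.2.1 hLLt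
    have hF'j1Jt : F'j1 ≤ Jt := le_trans hB.2.1 hJJt
    calc finrank K (↥F'') ≤ finrank K (↥(A' ⊔ B')) := finrank_mono hF''le
      _ = finrank K (↥A') * finrank K (↥B') := finrank_sup_sub hd inf_le_left inf_le_left
      _ ≤ finrank K (↥Fj1) * finrank K (↥F'j1) := Nat.mul_le_mul hrankA' hrankB'
      _ = finrank K (↥(Fj1 ⊔ F'j1)) := (finrank_sup_sub hd hFj1Lt hF'j1Jt).symm

end Steps

end SGMAux

/-- Suppose `M/K` is obtained by strong general magnification from `L/K`
through `J/K`.  If `N` (of length `k`) and `N'` (of length `k'`) are the unique descending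
chains of `L/K` and `J/K`, extended constantly beyond their lengths, and `F` (of length `l`)
and `F'` (of length `l'`) are the unique ascending chains of `L/K` and `J/K`, extended
constantly, then the unique descending chain of `M/K` has `i`-th field `N i ⊔ N' i`
(for `i ≤ max k k'`) and the unique ascending chain of `M/K` has `j`-th field `F j ⊔ F' j`
(for `j ≤ max l l'`). -/
theorem strong_general_magnification_unique_chains
    (K Kbar : Type*) [Field K] [PerfectField K] [Field Kbar] [Algebra K Kbar]
    [IsAlgClosure K Kbar]
    (M L J : IntermediateField K Kbar) [FiniteDimensional K ↥M]
    (hSGM : IsSGMvia K Kbar M L J)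
    (N N' F F' : ℕ → IntermediateField K Kbar) (k k' l l' : ℕ)
    -- the unique descending chain of L/K
    (hN0 : N 0 = L)
    (hNstep : ∀ i < k, DescStep K Kbar (N i) (N (i + 1)))
    (hNstrict : ∀ i < k, N (i + 1) ≠ N i)
    (hNconst : ∀ i, k ≤ i → N i = N k)
    (hNterm : DescStep K Kbar (N k) (N k))
    -- the unique descending chain of J/K
    (hN'0 : N' 0 = J)
    (hN'step : ∀ i < k', DescStep K Kbar (N' i) (N' (i + 1)))
    (hN'strict : ∀ i < k', N' (i + 1) ≠ N' i)
    (hN'const : ∀ i, k' ≤ i → N' i = N' k')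
    (hN'term : DescStep K Kbar (N' k') (N' k'))
    -- the unique ascending chain of L/K
    (hF0 : F 0 = ⊥)
    (hFstep : ∀ j < l, AscStep K Kbar L (F j) (F (j + 1)))
    (hFstrict : ∀ j < l, F j ≠ F (j + 1))
    (hFconst : ∀ j, l ≤ j → F j = F l)
    (hFterm : AscStep K Kbar L (F l) (F l))
    -- the unique ascending chain of J/K
    (hF'0 : F' 0 = ⊥)
    (hF'step : ∀ j < l', AscStep K Kbar J (F' j) (F' (j + 1)))
    (hF'strict : ∀ j < l', F' j ≠ F' (j + 1))
    (hF'const : ∀ j, l' ≤ j → F' j = F' l')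
    (hF'term : AscStep K Kbar J (F' l') (F' l')) :
    -- the unique descending chain of M/K is i ↦ N i ⊔ N' i
    (N 0 ⊔ N' 0 = M) ∧
    (∀ i < max k k', DescStep K Kbar (N i ⊔ N' i) (N (i + 1) ⊔ N' (i + 1)) ∧
      N (i + 1) ⊔ N' (i + 1) ≠ N i ⊔ N' i) ∧
    DescStep K Kbar (N (max k k') ⊔ N' (max k k')) (N (max k k') ⊔ N' (max k k')) ∧
    -- the unique ascending chain of M/K is j ↦ F j ⊔ F' j
    (F 0 ⊔ F' 0 = ⊥) ∧
    (∀ j < max l l', AscStep K Kbar M (F j ⊔ F' j) (F (j + 1) ⊔ F' (j + 1)) ∧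
      F j ⊔ F' j ≠ F (j + 1) ⊔ F' (j + 1)) ∧
    AscStep K Kbar M (F (max l l') ⊔ F' (max l l')) (F (max l l') ⊔ F' (max l l')) := by
  classical
  obtain ⟨hLM, hL2, hJfin, hdisj, hLJ⟩ := hSGM
  haveI : FiniteDimensional K (↥L) := SGMAux.findim_of_le hLM
  haveI : FiniteDimensional K (↥J) := hJfin
  haveI hLtfin : FiniteDimensional K (↥(galClosure K Kbar L)) :=
    SGMAux.galClosure_finiteDimensional L
  haveI hJtfin : FiniteDimensional K (↥(galClosure K Kbar J)) :=
    SGMAux.galClosure_finiteDimensional J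
  have hLtn : Normal K (↥(galClosure K Kbar L)) := SGMAux.galClosure_normal L
  have hd : (galClosure K Kbar L).LinearDisjoint (galClosure K Kbar J) :=
    SGMAux.linearDisjoint_of_inf_bot _ _ hLtn hdisj
  have hLLt : L ≤ galClosure K Kbar L := SGMAux.le_galClosure L
  have hJJt : J ≤ galClosure K Kbar J := SGMAux.le_galClosure J
  have hfr : ∀ X Y : IntermediateField K Kbar, X ≤ L → Y ≤ J →
      finrank K (↥(X ⊔ Y)) = finrank K (↥X) * finrank K (↥Y) := by
    intro X Y hX hY
    exact SGMAux.finrank_sup_sub hd (hX.trans hLLt) (hY.trans hJJt)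
  -- chain step facts extended past the chain length
  have hNstepAll : ∀ i, DescStep K Kbar (N i) (N (i + 1)) := by
    intro i
    by_cases h : i < k
    · exact hNstep i h
    · have h1 : N i = N k := hNconst i (le_of_not_gt h)
      have h2 : N (i + 1) = N k := hNconst (i + 1) (by omega)
      rw [h1, h2]; exact hNterm
  have hN'stepAll : ∀ i, DescStep K Kbar (N' i) (N' (i + 1)) := by
    intro i
    by_cases h : i < k'
    · exact hN'step i h
    · have h1 : N' i = N' k' := hN'const i (le_of_not_gt h)
      have h2 : N' (i + 1) = N' k' := hN'const (i + 1) (by omega)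
      rw [h1, h2]; exact hN'term
  have hNleL : ∀ i, N i ≤ L := by
    intro i
    induction i with
    | zero => rw [hN0]
    | succ n ih => exact le_trans (hNstepAll n).1 ih
  have hN'leJ : ∀ i, N' i ≤ J := by
    intro i
    induction i with
    | zero => rw [hN'0]
    | succ n ih => exact le_trans (hN'stepAll n).1 ih
  have hFstepAll : ∀ j, AscStep K Kbar L (F j) (F (j + 1)) := by
    intro j
    by_cases h : j < l
    · exact hFstep j h
    · have h1 : F j = F l := hFconst j (le_of_not_gt h)
      have h2 : F (j + 1) = F l := hFconst (j + 1) (by omega)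
      rw [h1, h2]; exact hFterm
  have hF'stepAll : ∀ j, AscStep K Kbar J (F' j) (F' (j + 1)) := by
    intro j
    by_cases h : j < l'
    · exact hF'step j h
    · have h1 : F' j = F' l' := hF'const j (le_of_not_gt h)
      have h2 : F' (j + 1) = F' l' := hF'const (j + 1) (by omega)
      rw [h1, h2]; exact hF'term
  have hFleL : ∀ j, F j ≤ L := by
    intro j
    cases j with
    | zero => rw [hF0]; exact bot_le
    | succ n => exact (hFstepAll n).2.1
  have hF'leJ : ∀ j, F' j ≤ J := by
    intro j
    cases j with
    | zero => rw [hF'0]; exact bot_le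
    | succ n => exact (hF'stepAll n).2.1
  refine ⟨by rw [hN0, hN'0]; exact hLJ, ?_, ?_, by rw [hF0, hF'0, sup_idem], ?_, ?_⟩
  · -- descending steps with strictness
    intro i hi
    refine ⟨SGMAux.descStep_sup hdisj (hNleL i) (hN'leJ i) (hNstepAll i) (hN'stepAll i), ?_⟩
    intro heq
    haveI : FiniteDimensional K (↥(N i)) := SGMAux.findim_of_le (hNleL i)
    haveI : FiniteDimensional K (↥(N' i)) := SGMAux.findim_of_le (hN'leJ i)
    have hm1 : N (i + 1) ≤ N i := (hNstepAll i).1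
    have hm2 : N' (i + 1) ≤ N' i := (hN'stepAll i).1
    haveI : FiniteDimensional K (↥(N' (i + 1))) := SGMAux.findim_of_le (hN'leJ (i + 1))
    have hposN : 0 < finrank K (↥(N i)) := Module.finrank_pos
    have hposN' : 0 < finrank K (↥(N' (i + 1))) := Module.finrank_pos
    have hprod : finrank K (↥(N (i + 1))) * finrank K (↥(N' (i + 1))) <
        finrank K (↥(N i)) * finrank K (↥(N' i)) := by
      rcases lt_max_iff.1 hi with h | h
      · have hlt : finrank K (↥(N (i + 1))) < finrank K (↥(N i)) :=
          SGMAux.finrank_strict_mono hm1 (hNstrict i h)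
        have hle2 : finrank K (↥(N' (i + 1))) ≤ finrank K (↥(N' i)) :=
          SGMAux.finrank_mono hm2
        calc finrank K (↥(N (i + 1))) * finrank K (↥(N' (i + 1)))
            < finrank K (↥(N i)) * finrank K (↥(N' (i + 1))) :=
              (Nat.mul_lt_mul_right hposN').2 hlt
          _ ≤ finrank K (↥(N i)) * finrank K (↥(N' i)) := Nat.mul_le_mul_left _ hle2
      · have hlt : finrank K (↥(N' (i + 1))) < finrank K (↥(N' i)) :=
          SGMAux.finrank_strict_mono hm2 (hN'strict i h)
        have hle1 : finrank K (↥(N (i + 1))) ≤ finrank K (↥(N i)) :=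
          SGMAux.finrank_mono hm1
        calc finrank K (↥(N (i + 1))) * finrank K (↥(N' (i + 1)))
            ≤ finrank K (↥(N i)) * finrank K (↥(N' (i + 1))) :=
              Nat.mul_le_mul_right _ hle1
          _ < finrank K (↥(N i)) * finrank K (↥(N' i)) := (Nat.mul_lt_mul_left hposN).2 hlt
    have e1 : finrank K (↥(N (i + 1) ⊔ N' (i + 1))) =
        finrank K (↥(N (i + 1))) * finrank K (↥(N' (i + 1))) :=
      hfr _ _ (hNleL (i + 1)) (hN'leJ (i + 1))
    have e2 : finrank K (↥(N i ⊔ N' i)) = finrank K (↥(N i)) * finrank K (↥(N' i)) :=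
      hfr _ _ (hNleL i) (hN'leJ i)
    rw [heq, e2] at e1
    omega
  · -- descending terminal step
    have hd1 : DescStep K Kbar (N (max k k')) (N (max k k')) := by
      rw [hNconst _ (le_max_left k k')]; exact hNterm
    have hd2 : DescStep K Kbar (N' (max k k')) (N' (max k k')) := by
      rw [hN'const _ (le_max_right k k')]; exact hN'term
    exact SGMAux.descStep_sup hdisj (hNleL _) (hN'leJ _) hd1 hd2
  · -- ascending steps with strictness
    intro j hj
    refine ⟨SGMAux.ascStep_sup hdisj hLJ (hFstepAll j) (hF'stepAll j), ?_⟩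
    intro heq
    haveI : FiniteDimensional K (↥(F (j + 1))) := SGMAux.findim_of_le (hFleL (j + 1))
    haveI : FiniteDimensional K (↥(F' (j + 1))) := SGMAux.findim_of_le (hF'leJ (j + 1))
    have hm1 : F j ≤ F (j + 1) := (hFstepAll j).1
    have hm2 : F' j ≤ F' (j + 1) := (hF'stepAll j).1
    haveI : FiniteDimensional K (↥(F' j)) := SGMAux.findim_of_le (hF'leJ j)
    have hposF : 0 < finrank K (↥(F (j + 1))) := Module.finrank_pos
    have hposF' : 0 < finrank K (↥(F' j)) := Module.finrank_pos
    have hprod : finrank K (↥(F j)) * finrank K (↥(F' j)) <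
        finrank K (↥(F (j + 1))) * finrank K (↥(F' (j + 1))) := by
      rcases lt_max_iff.1 hj with h | h
      · have hlt : finrank K (↥(F j)) < finrank K (↥(F (j + 1))) :=
          SGMAux.finrank_strict_mono hm1 (hFstrict j h)
        have hle2 : finrank K (↥(F' j)) ≤ finrank K (↥(F' (j + 1))) :=
          SGMAux.finrank_mono hm2
        calc finrank K (↥(F j)) * finrank K (↥(F' j))
            < finrank K (↥(F (j + 1))) * finrank K (↥(F' j)) :=
              (Nat.mul_lt_mul_right hposF').2 hlt
          _ ≤ finrank K (↥(F (j + 1))) * finrank K (↥(F' (j + 1))) :=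
              Nat.mul_le_mul_left _ hle2
      · have hlt : finrank K (↥(F' j)) < finrank K (↥(F' (j + 1))) :=
          SGMAux.finrank_strict_mono hm2 (hF'strict j h)
        have hle1 : finrank K (↥(F j)) ≤ finrank K (↥(F (j + 1))) :=
          SGMAux.finrank_mono hm1
        calc finrank K (↥(F j)) * finrank K (↥(F' j))
            ≤ finrank K (↥(F (j + 1))) * finrank K (↥(F' j)) :=
              Nat.mul_le_mul_right _ hle1
          _ < finrank K (↥(F (j + 1))) * finrank K (↥(F' (j + 1))) :=
              (Nat.mul_lt_mul_left hposF).2 hlt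
    have e1 : finrank K (↥(F j ⊔ F' j)) = finrank K (↥(F j)) * finrank K (↥(F' j)) :=
      hfr _ _ (hFleL j) (hF'leJ j)
    have e2 : finrank K (↥(F (j + 1) ⊔ F' (j + 1))) =
        finrank K (↥(F (j + 1))) * finrank K (↥(F' (j + 1))) :=
      hfr _ _ (hFleL (j + 1)) (hF'leJ (j + 1))
    rw [heq, e2] at e1
    omega
  · -- ascending terminal step
    have ha1 : AscStep K Kbar L (F (max l l')) (F (max l l')) := by
      rw [hFconst _ (le_max_left l l')]; exact hFterm
    have ha2 : AscStep K Kbar J (F' (max l l')) (F' (max l l')) := by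
      rw [hF'const _ (le_max_right l l')]; exact hF'term
    exact SGMAux.ascStep_sup hdisj hLJ ha1 ha2
end
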